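/- arXiv:0804.1307 — 8 statements merged into one kernel-verified Lean document; each statement's English description precedes it below -/
import Mathlib

section
/- Any two non-degenerate triangles formed by points of a plane integral point set have the same characteristic, i.e., the squarefree parts of (a+b+c)(a+b-c)(a-b+c)(-a+b+c) agree for any two non-collinear triples of points of the set. -/
noncomputable section

abbrev E2 := EuclideanSpace ℝ (Fin 2)

lemma dist_sq_coord (v w : E2) :
    dist v w ^ 2 = (v 0 - w 0) ^ 2 + (v 1 - w 1) ^ 2 := by
  rw [EuclideanSpace.dist_eq, Real.sq_sqrt (by positivity)]
  simp [Fin.sum_univ_two, Real.dist_eq, sq_abs]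

def Xn (p1 p2 R : E2) : ℝ :=
  (R 0 - p1 0) * (p2 0 - p1 0) + (R 1 - p1 1) * (p2 1 - p1 1)

def Yn (p1 p2 R : E2) : ℝ :=
  (p2 0 - p1 0) * (R 1 - p1 1) - (p2 1 - p1 1) * (R 0 - p1 0)

lemma frame_eq {p1 p2 : E2} {a : ℝ}
    (hu : (p2 0 - p1 0) ^ 2 + (p2 1 - p1 1) ^ 2 = a ^ 2) (R R' : E2) :
    (Xn p1 p2 R - Xn p1 p2 R') ^ 2 + (Yn p1 p2 R - Yn p1 p2 R') ^ 2
      = dist R R' ^ 2 * a ^ 2 := by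
  rw [dist_sq_coord]
  unfold Xn Yn
  linear_combination ((R 0 - R' 0) ^ 2 + (R 1 - R' 1) ^ 2) * hu

lemma det_frame {p1 p2 : E2} {a : ℝ}
    (hu : (p2 0 - p1 0) ^ 2 + (p2 1 - p1 1) ^ 2 = a ^ 2) (q1 q2 q3 : E2) :
    (Xn p1 p2 q2 - Xn p1 p2 q1) * (Yn p1 p2 q3 - Yn p1 p2 q1)
      - (Xn p1 p2 q3 - Xn p1 p2 q1) * (Yn p1 p2 q2 - Yn p1 p2 q1)
      = a ^ 2 * ((q2 0 - q1 0) * (q3 1 - q1 1) - (q3 0 - q1 0) * (q2 1 - q1 1)) := by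
  unfold Xn Yn
  linear_combination ((q2 0 - q1 0) * (q3 1 - q1 1) - (q3 0 - q1 0) * (q2 1 - q1 1)) * hu

lemma heron (p1 p2 p3 : E2) (a b c : ℝ)
    (ha : dist p1 p2 = a) (hb : dist p2 p3 = b) (hc : dist p1 p3 = c) :
    (a + b + c) * (a + b - c) * (a - b + c) * (-a + b + c)
      = 4 * ((p2 0 - p1 0) * (p3 1 - p1 1) - (p3 0 - p1 0) * (p2 1 - p1 1)) ^ 2 := by
  have hA := dist_sq_coord p1 p2; rw [ha] at hA
  have hB := dist_sq_coord p2 p3; rw [hb] at hB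
  have hC := dist_sq_coord p1 p3; rw [hc] at hC
  linear_combination
    (2 * ((p2 0 - p3 0) ^ 2 + (p2 1 - p3 1) ^ 2) + 2 * c ^ 2
      - ((p1 0 - p2 0) ^ 2 + (p1 1 - p2 1) ^ 2) - a ^ 2) * hA
    + (2 * a ^ 2 + 2 * ((p1 0 - p3 0) ^ 2 + (p1 1 - p3 1) ^ 2)
      - ((p2 0 - p3 0) ^ 2 + (p2 1 - p3 1) ^ 2) - b ^ 2) * hB
    + (2 * b ^ 2 + 2 * ((p1 0 - p2 0) ^ 2 + (p1 1 - p2 1) ^ 2)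
      - ((p1 0 - p3 0) ^ 2 + (p1 1 - p3 1) ^ 2) - c ^ 2) * hC

lemma nat_isSquare_of_rat_sq {N : ℕ} {r : ℚ} (h : (N : ℚ) = r ^ 2) : IsSquare N := by
  by_contra hns
  have hirr : Irrational (Real.sqrt N) := irrational_sqrt_natCast_iff.mpr hns
  refine hirr ⟨|r|, ?_⟩
  have h2 : ((N : ℝ)) = (r : ℝ) ^ 2 := by exact_mod_cast h
  rw [h2, Real.sqrt_sq_eq_abs]
  push_cast
  ring

lemma squarefree_eq_of_sq {k k' W m : ℕ} (hk : Squarefree k) (hk' : Squarefree k')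
    (hW : W ≠ 0) (h : k * k' * W ^ 2 = m ^ 2) : k = k' := by
  have hWm : W ∣ m := by
    refine (Nat.pow_dvd_pow_iff (two_ne_zero)).mp ⟨k * k', by linarith⟩
  obtain ⟨t, rfl⟩ := hWm
  have hkk' : k * k' = t ^ 2 := by
    have hW2 : W ^ 2 ≠ 0 := pow_ne_zero _ hW
    have : W ^ 2 * (k * k') = W ^ 2 * t ^ 2 := by ring_nf; ring_nf at h; linarith
    exact Nat.eq_of_mul_eq_mul_left (Nat.pos_of_ne_zero hW2) this
  have hkt : k ∣ t := by
    refine (hk.dvd_pow_iff_dvd two_ne_zero).mp ⟨k', hkk'.symm⟩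
  obtain ⟨u, rfl⟩ := hkt
  have hk0 : k ≠ 0 := hk.ne_zero
  have hk'u : k' = u ^ 2 * k := by
    have : k * k' = k * (u ^ 2 * k) := by linarith [hkk']
    exact Nat.eq_of_mul_eq_mul_left (Nat.pos_of_ne_zero hk0) this
  have hu1 : IsUnit u := hk' u (by rw [hk'u]; exact ⟨k, by ring⟩)
  rw [hk'u, Nat.isUnit_iff.mp hu1]
  ring

/-- Any two non-degenerate triangles formed by points of a plane integral point set
have the same characteristic: the squarefree parts of
`(a+b+c)(a+b-c)(a-b+c)(-a+b+c)` agree for any two non-collinear triples of points. -/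
theorem char_eq_of_integral_point_set (S : Set (EuclideanSpace ℝ (Fin 2))) (hfin : S.Finite)
    (hint : ∀ p ∈ S, ∀ q ∈ S, ∃ m : ℕ, dist p q = m)
    (hncol : ¬ Collinear ℝ S)
    (p1 p2 p3 q1 q2 q3 : EuclideanSpace ℝ (Fin 2))
    (hp1 : p1 ∈ S) (hp2 : p2 ∈ S) (hp3 : p3 ∈ S)
    (hq1 : q1 ∈ S) (hq2 : q2 ∈ S) (hq3 : q3 ∈ S)
    (hpnc : ¬ Collinear ℝ ({p1, p2, p3} : Set (EuclideanSpace ℝ (Fin 2))))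
    (hqnc : ¬ Collinear ℝ ({q1, q2, q3} : Set (EuclideanSpace ℝ (Fin 2))))
    (a b c a' b' c' : ℕ)
    (hda : dist p1 p2 = a) (hdb : dist p2 p3 = b) (hdc : dist p1 p3 = c)
    (hda' : dist q1 q2 = a') (hdb' : dist q2 q3 = b') (hdc' : dist q1 q3 = c')
    (k k' w w' : ℕ) (hk : Squarefree k) (hk' : Squarefree k') (hw : 0 < w) (hw' : 0 < w')
    (hQ : ((a : ℤ) + b + c) * ((a : ℤ) + b - c) * ((a : ℤ) - b + c) * (-(a : ℤ) + b + c)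
        = (k : ℤ) * (w : ℤ) ^ 2)
    (hQ' : ((a' : ℤ) + b' + c') * ((a' : ℤ) + b' - c') * ((a' : ℤ) - b' + c') *
        (-(a' : ℤ) + b' + c') = (k' : ℤ) * (w' : ℤ) ^ 2) :
    k = k' := by
  classical
  -- p1 ≠ p2
  have h12 : p1 ≠ p2 := by
    rintro rfl
    apply hpnc
    have h : ({p1, p1, p3} : Set (EuclideanSpace ℝ (Fin 2))) = {p1, p3} := by simp
    rw [h]
    exact collinear_pair ℝ p1 p3
  have ha0 : (a : ℝ) ≠ 0 := by
    rw [← hda]; exact (dist_pos.mpr h12).ne'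
  have haN : a ≠ 0 := by exact_mod_cast ha0
  -- base frame fact
  have hu : (p2 0 - p1 0) ^ 2 + (p2 1 - p1 1) ^ 2 = (a : ℝ) ^ 2 := by
    have h := dist_sq_coord p1 p2
    rw [hda] at h
    linear_combination -h
  have hx1 : Xn p1 p2 p1 = 0 := by unfold Xn; ring
  have hy1 : Yn p1 p2 p1 = 0 := by unfold Yn; ring
  have hx2 : Xn p1 p2 p2 = (a : ℝ) ^ 2 := by unfold Xn; linear_combination hu
  have hy2 : Yn p1 p2 p2 = 0 := by unfold Yn; ring
  -- X coordinates of points of S are rational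
  have hXval : ∀ R ∈ S, ∃ q : ℚ, Xn p1 p2 R = (q : ℝ) := by
    intro R hR
    obtain ⟨m, hm⟩ := hint p1 hp1 R hR
    obtain ⟨n, hn⟩ := hint p2 hp2 R hR
    refine ⟨((m : ℚ) ^ 2 - n ^ 2 + a ^ 2) / 2, ?_⟩
    have e1 := frame_eq hu R p1
    rw [dist_comm, hm, hx1, hy1] at e1
    have e2 := frame_eq hu R p2
    rw [dist_comm, hn, hx2, hy2] at e2
    have key : 2 * (a : ℝ) ^ 2 * Xn p1 p2 R
        = ((m : ℝ) ^ 2 - (n : ℝ) ^ 2 + (a : ℝ) ^ 2) * (a : ℝ) ^ 2 := by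
      linear_combination e1 - e2
    have ha2 : ((a : ℝ)) ^ 2 ≠ 0 := pow_ne_zero _ ha0
    have hfin2 : 2 * Xn p1 p2 R = (m : ℝ) ^ 2 - (n : ℝ) ^ 2 + (a : ℝ) ^ 2 := by
      apply mul_left_cancel₀ ha2
      linear_combination key
    push_cast
    linarith
  -- products of Y coordinates are rational
  have hYY : ∀ R ∈ S, ∀ R' ∈ S, ∃ q : ℚ, Yn p1 p2 R * Yn p1 p2 R' = (q : ℝ) := by
    intro R hR R' hR'
    obtain ⟨x, hx⟩ := hXval R hR
    obtain ⟨x', hx'⟩ := hXval R' hR'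
    obtain ⟨m, hm⟩ := hint p1 hp1 R hR
    obtain ⟨m', hm'⟩ := hint p1 hp1 R' hR'
    obtain ⟨d, hd⟩ := hint R hR R' hR'
    have e1 := frame_eq hu R p1
    rw [dist_comm, hm, hx1, hy1] at e1
    have e1' := frame_eq hu R' p1
    rw [dist_comm, hm', hx1, hy1] at e1'
    have e3 := frame_eq hu R R'
    rw [hd] at e3
    refine ⟨((m : ℚ) ^ 2 * a ^ 2 - x ^ 2 + ((m' : ℚ) ^ 2 * a ^ 2 - x' ^ 2)
      - ((d : ℚ) ^ 2 * a ^ 2 - (x - x') ^ 2)) / 2, ?_⟩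
    push_cast
    rw [← hx, ← hx']
    linear_combination (e1 + e1' - e3) / 2
  -- Heron for the two triangles
  have hP : (k : ℝ) * (w : ℝ) ^ 2 = 4 * (Yn p1 p2 p3) ^ 2 := by
    have h1 := heron p1 p2 p3 (a : ℝ) (b : ℝ) (c : ℝ) hda hdb hdc
    have h2 : ((a : ℝ) + b + c) * ((a : ℝ) + b - c) * ((a : ℝ) - b + c) * (-(a : ℝ) + b + c)
        = (k : ℝ) * (w : ℝ) ^ 2 := by exact_mod_cast congrArg (Int.cast : ℤ → ℝ) hQ
    unfold Yn
    linear_combination h1 - h2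
  have hQ2 : (k' : ℝ) * (w' : ℝ) ^ 2
      = 4 * ((q2 0 - q1 0) * (q3 1 - q1 1) - (q3 0 - q1 0) * (q2 1 - q1 1)) ^ 2 := by
    have h1 := heron q1 q2 q3 (a' : ℝ) (b' : ℝ) (c' : ℝ) hda' hdb' hdc'
    have h2 : ((a' : ℝ) + b' + c') * ((a' : ℝ) + b' - c') * ((a' : ℝ) - b' + c')
        * (-(a' : ℝ) + b' + c')
        = (k' : ℝ) * (w' : ℝ) ^ 2 := by exact_mod_cast congrArg (Int.cast : ℤ → ℝ) hQ'
    linear_combination h1 - h2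
  -- the rational witness
  obtain ⟨x1, hxq1⟩ := hXval q1 hq1
  obtain ⟨x2, hxq2⟩ := hXval q2 hq2
  obtain ⟨x3, hxq3⟩ := hXval q3 hq3
  obtain ⟨t1, ht1⟩ := hYY q1 hq1 p3 hp3
  obtain ⟨t2, ht2⟩ := hYY q2 hq2 p3 hp3
  obtain ⟨t3, ht3⟩ := hYY q3 hq3 p3 hp3
  have hdet := det_frame hu q1 q2 q3
  have hqv : ((x2 : ℝ) - x1) * ((t3 : ℝ) - t1) - ((x3 : ℝ) - x1) * ((t2 : ℝ) - t1)
      = (a : ℝ) ^ 2 * ((q2 0 - q1 0) * (q3 1 - q1 1) - (q3 0 - q1 0) * (q2 1 - q1 1))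
        * Yn p1 p2 p3 := by
    rw [← hxq1, ← hxq2, ← hxq3, ← ht1, ← ht2, ← ht3]
    linear_combination Yn p1 p2 p3 * hdet
  have hNR : ((k * k' * (a ^ 2 * w * w') ^ 2 : ℕ) : ℝ)
      = (((4 * ((x2 - x1) * (t3 - t1) - (x3 - x1) * (t2 - t1))) ^ 2 : ℚ) : ℝ) := by
    push_cast
    linear_combination (a : ℝ) ^ 4 * (k' : ℝ) * (w' : ℝ) ^ 2 * hP
      + 4 * (a : ℝ) ^ 4 * (Yn p1 p2 p3) ^ 2 * hQ2
      - 16 * (((x2 : ℝ) - x1) * ((t3 : ℝ) - t1) - ((x3 : ℝ) - x1) * ((t2 : ℝ) - t1)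
        + (a : ℝ) ^ 2 * ((q2 0 - q1 0) * (q3 1 - q1 1) - (q3 0 - q1 0) * (q2 1 - q1 1))
          * Yn p1 p2 p3) * hqv
  have hNQ : ((k * k' * (a ^ 2 * w * w') ^ 2 : ℕ) : ℚ)
      = (4 * ((x2 - x1) * (t3 - t1) - (x3 - x1) * (t2 - t1))) ^ 2 := by
    exact_mod_cast hNR
  obtain ⟨m, hm⟩ := nat_isSquare_of_rat_sq hNQ
  refine squarefree_eq_of_sq (m := m) hk hk' (W := a ^ 2 * w * w') ?_ ?_
  · positivity
  · rw [hm]; ring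
end
end

section
/- The minimum possible diameter of a plane integral point set of 4 points is 4; that is, there exist 4 non-collinear points in ℝ² with pairwise integral distances and largest distance 4, and no such configuration exists with largest distance at most 3. -/
open scoped RealInnerProductSpace

def Pkey (a b c d e f : ℤ) : Prop :=
    4*a^2*b^2*c^2
      + (a^2+b^2-d^2)*(a^2+c^2-e^2)*(b^2+c^2-f^2)
      - a^2*((b^2+c^2-f^2)^2)
      - b^2*((a^2+c^2-e^2)^2)
      - c^2*((a^2+b^2-d^2)^2) = 0 →
    4*a^2*b^2 = (a^2+b^2-d^2)^2 ∧ 4*a^2*c^2 = (a^2+c^2-e^2)^2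

instance (a b c d e f : ℤ) : Decidable (Pkey a b c d e f) := by unfold Pkey; infer_instance

lemma key0 : ∀ a ∈ Finset.Icc (1:ℤ) 3, ∀ b ∈ Finset.Icc (1:ℤ) 3, ∀ c ∈ Finset.Icc (1:ℤ) 3,
    ∀ d ∈ Finset.Icc (1:ℤ) 3, ∀ e ∈ Finset.Icc (1:ℤ) 3, ∀ f ∈ Finset.Icc (1:ℤ) 3,
    Pkey a b c d e f := by decide

lemma key {a b c d e f : ℤ} (ha : 1 ≤ a) (ha' : a ≤ 3) (hb : 1 ≤ b) (hb' : b ≤ 3)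
    (hc : 1 ≤ c) (hc' : c ≤ 3) (hd : 1 ≤ d) (hd' : d ≤ 3) (he : 1 ≤ e) (he' : e ≤ 3)
    (hf : 1 ≤ f) (hf' : f ≤ 3) : Pkey a b c d e f :=
  key0 a (Finset.mem_Icc.2 ⟨ha, ha'⟩) b (Finset.mem_Icc.2 ⟨hb, hb'⟩) c (Finset.mem_Icc.2 ⟨hc, hc'⟩)
    d (Finset.mem_Icc.2 ⟨hd, hd'⟩) e (Finset.mem_Icc.2 ⟨he, he'⟩) f (Finset.mem_Icc.2 ⟨hf, hf'⟩)

/-- Gram determinant of 3 vectors in the plane vanishes. -/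
lemma gram_det_zero (v : Fin 3 → EuclideanSpace ℝ (Fin 2)) :
    Matrix.det (Matrix.of fun i j => ⟪v i, v j⟫) = 0 := by
  have hdim : Module.finrank ℝ (EuclideanSpace ℝ (Fin 2)) = 2 := by simp
  have hni : ¬ LinearIndependent ℝ v := by
    intro h
    have := h.fintype_card_le_finrank
    simp [hdim] at this
  rw [Fintype.not_linearIndependent_iff] at hni
  obtain ⟨g, hg, i, hi⟩ := hni
  rw [← Matrix.exists_mulVec_eq_zero_iff]
  refine ⟨g, fun h => hi (congrFun h i), ?_⟩
  ext j
  simp only [Matrix.mulVec, dotProduct, Matrix.of_apply, Pi.zero_apply]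
  have : ∑ k, ⟪v j, v k⟫ * g k = ⟪v j, ∑ k, g k • v k⟫ := by
    rw [inner_sum]; congr 1; ext k; rw [real_inner_smul_right]; ring
  rw [this, hg, inner_zero_right]

/-- Cauchy–Schwarz equality case. -/
lemma dep_of_gram {x y : EuclideanSpace ℝ (Fin 2)} (hx : x ≠ 0)
    (h : ⟪x, y⟫ ^ 2 = ‖x‖^2 * ‖y‖^2) : ∃ r : ℝ, y = r • x := by
  have hxn : ‖x‖ ≠ 0 := norm_ne_zero_iff.2 hx
  have solve : ∀ c : ℝ, ‖x‖ • y = c • x → ∃ r : ℝ, y = r • x := by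
    intro c hc
    refine ⟨c / ‖x‖, ?_⟩
    have h2 := congrArg (fun z => ‖x‖⁻¹ • z) hc
    simpa [smul_smul, inv_mul_cancel₀ hxn, div_eq_inv_mul] using h2
  have h2 : (⟪x, y⟫ - ‖x‖ * ‖y‖) * (⟪x, y⟫ + ‖x‖ * ‖y‖) = 0 := by nlinarith [h]
  rcases mul_eq_zero.mp h2 with h1 | h1
  · have h1' : ⟪x, y⟫ = ‖x‖ * ‖y‖ := by linarith
    have := inner_eq_norm_mul_iff_real.mp h1'
    exact solve ‖y‖ this.symm
  · have h1' : ⟪x, -y⟫ = ‖x‖ * ‖-y‖ := by rw [inner_neg_right, norm_neg]; linarith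
    have h3 := inner_eq_norm_mul_iff_real.mp h1'
    rw [norm_neg, smul_neg] at h3
    exact solve (-‖y‖) (by rw [neg_smul, h3, neg_neg])

noncomputable def mk2 (x y : ℝ) : EuclideanSpace ℝ (Fin 2) :=
  (WithLp.equiv 2 (Fin 2 → ℝ)).symm ![x, y]

@[simp] lemma mk2_apply0 (x y : ℝ) : mk2 x y 0 = x := rfl
@[simp] lemma mk2_apply1 (x y : ℝ) : mk2 x y 1 = y := rfl

lemma dist_calc (x1 y1 x2 y2 m : ℝ) (hm : 0 ≤ m)
    (h : (x1 - x2)^2 + (y1 - y2)^2 = m^2) :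
    dist (mk2 x1 y1) (mk2 x2 y2) = m := by
  rw [EuclideanSpace.dist_eq, Fin.sum_univ_two]
  simp only [mk2_apply0, mk2_apply1, Real.dist_eq]
  rw [sq_abs, sq_abs, h]
  exact Real.sqrt_sq hm

lemma mk2_ne {x1 y1 x2 y2 : ℝ} (h : x1 ≠ x2) : mk2 x1 y1 ≠ mk2 x2 y2 := by
  intro hEq
  exact h (by rw [← mk2_apply0 x1 y1, hEq, mk2_apply0])

noncomputable def pA : EuclideanSpace ℝ (Fin 2) := mk2 0 0
noncomputable def pB : EuclideanSpace ℝ (Fin 2) := mk2 3 0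
noncomputable def pC : EuclideanSpace ℝ (Fin 2) := mk2 4 0
noncomputable def pD : EuclideanSpace ℝ (Fin 2) := mk2 (7/2) (Real.sqrt 15 / 2)


lemma hs15 : (Real.sqrt 15)^2 = 15 := Real.sq_sqrt (by norm_num)

lemma dAB : dist pA pB = (3:ℝ) := dist_calc _ _ _ _ _ (by norm_num) (by norm_num)
lemma dAC : dist pA pC = (4:ℝ) := dist_calc _ _ _ _ _ (by norm_num) (by norm_num)
lemma dBC : dist pB pC = (1:ℝ) := dist_calc _ _ _ _ _ (by norm_num) (by norm_num)
lemma dAD : dist pA pD = (4:ℝ) := dist_calc _ _ _ _ _ (by norm_num)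
  (by linear_combination hs15/4)
lemma dBD : dist pB pD = (2:ℝ) := dist_calc _ _ _ _ _ (by norm_num)
  (by linear_combination hs15/4)
lemma dCD : dist pC pD = (2:ℝ) := dist_calc _ _ _ _ _ (by norm_num)
  (by linear_combination hs15/4)
lemma dBA : dist pB pA = (3:ℝ) := by rw [dist_comm]; exact dAB
lemma dCA : dist pC pA = (4:ℝ) := by rw [dist_comm]; exact dAC
lemma dCB : dist pC pB = (1:ℝ) := by rw [dist_comm]; exact dBC
lemma dDA : dist pD pA = (4:ℝ) := by rw [dist_comm]; exact dAD
lemma dDB : dist pD pB = (2:ℝ) := by rw [dist_comm]; exact dBD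
lemma dDC : dist pD pC = (2:ℝ) := by rw [dist_comm]; exact dCD

lemma hABne : pA ≠ pB := mk2_ne (by norm_num)
lemma hACne : pA ≠ pC := mk2_ne (by norm_num)
lemma hADne : pA ≠ pD := mk2_ne (by norm_num)
lemma hBCne : pB ≠ pC := mk2_ne (by norm_num)
lemma hBDne : pB ≠ pD := mk2_ne (by norm_num)
lemma hCDne : pC ≠ pD := mk2_ne (by norm_num)

lemma exist_part :
    ∃ S : Finset (EuclideanSpace ℝ (Fin 2)), S.card = 4 ∧
      (∀ p ∈ S, ∀ q ∈ S, ∃ m : ℕ, dist p q = m) ∧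
      ¬ Collinear ℝ (S : Set (EuclideanSpace ℝ (Fin 2))) ∧
      (∀ p ∈ S, ∀ q ∈ S, dist p q ≤ 4) ∧
      (∃ p ∈ S, ∃ q ∈ S, dist p q = 4) := by
  classical
  refine ⟨{pA, pB, pC, pD}, ?_, ?_, ?_, ?_, ?_⟩
  · rw [Finset.card_insert_of_notMem (by simp [hABne, hACne, hADne]),
      Finset.card_insert_of_notMem (by simp [hBCne, hBDne]),
      Finset.card_insert_of_notMem (by simp [hCDne]), Finset.card_singleton]
  · intro p hp q hq
    simp only [Finset.mem_insert, Finset.mem_singleton] at hp hq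
    rcases hp with rfl | rfl | rfl | rfl <;> rcases hq with rfl | rfl | rfl | rfl
    all_goals first
      | (rw [dist_self]; exact ⟨0, by norm_num⟩)
      | (rw [dAB]; exact ⟨3, by norm_num⟩) | (rw [dBA]; exact ⟨3, by norm_num⟩)
      | (rw [dAC]; exact ⟨4, by norm_num⟩) | (rw [dCA]; exact ⟨4, by norm_num⟩)
      | (rw [dAD]; exact ⟨4, by norm_num⟩) | (rw [dDA]; exact ⟨4, by norm_num⟩)
      | (rw [dBC]; exact ⟨1, by norm_num⟩) | (rw [dCB]; exact ⟨1, by norm_num⟩)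
      | (rw [dBD]; exact ⟨2, by norm_num⟩) | (rw [dDB]; exact ⟨2, by norm_num⟩)
      | (rw [dCD]; exact ⟨2, by norm_num⟩) | (rw [dDC]; exact ⟨2, by norm_num⟩)
  · intro hcol
    have hmem : pA ∈ (↑({pA, pB, pC, pD} : Finset (EuclideanSpace ℝ (Fin 2))) :
        Set (EuclideanSpace ℝ (Fin 2))) := by simp
    rw [collinear_iff_of_mem hmem] at hcol
    obtain ⟨v, hv⟩ := hcol
    obtain ⟨rB, hrB⟩ := hv pB (by simp)
    obtain ⟨rD, hrD⟩ := hv pD (by simp)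
    have hB1 : (0:ℝ) = rB * v 1 + 0 := by
      have h1 := congrArg (fun p : EuclideanSpace ℝ (Fin 2) => p 1) hrB
      simpa [pB, pA, vadd_eq_add, PiLp.add_apply, PiLp.smul_apply, smul_eq_mul] using h1
    have hB0 : (3:ℝ) = rB * v 0 + 0 := by
      have h1 := congrArg (fun p : EuclideanSpace ℝ (Fin 2) => p 0) hrB
      simpa [pB, pA, vadd_eq_add, PiLp.add_apply, PiLp.smul_apply, smul_eq_mul] using h1
    have hD1 : Real.sqrt 15 / 2 = rD * v 1 + 0 := by
      have h1 := congrArg (fun p : EuclideanSpace ℝ (Fin 2) => p 1) hrD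
      simpa [pD, pA, vadd_eq_add, PiLp.add_apply, PiLp.smul_apply, smul_eq_mul] using h1
    have hrBne : rB ≠ 0 := by intro h; rw [h] at hB0; norm_num at hB0
    have hv1 : v 1 = 0 := by
      have h2 : rB * v 1 = 0 := by linarith
      rcases mul_eq_zero.mp h2 with h | h
      · exact absurd h hrBne
      · exact h
    rw [hv1] at hD1
    have : (0:ℝ) < Real.sqrt 15 / 2 := by positivity
    rw [hD1] at this
    simp at this
  · intro p hp q hq
    simp only [Finset.mem_insert, Finset.mem_singleton] at hp hq
    rcases hp with rfl | rfl | rfl | rfl <;> rcases hq with rfl | rfl | rfl | rfl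
    all_goals first
      | (rw [dist_self]; first | done | norm_num)
      | (rw [dAB]; first | done | norm_num) | (rw [dBA]; first | done | norm_num)
      | (rw [dAC]; first | done | norm_num) | (rw [dCA]; first | done | norm_num)
      | (rw [dAD]; first | done | norm_num) | (rw [dDA]; first | done | norm_num)
      | (rw [dBC]; first | done | norm_num) | (rw [dCB]; first | done | norm_num)
      | (rw [dBD]; first | done | norm_num) | (rw [dDB]; first | done | norm_num)
      | (rw [dCD]; first | done | norm_num) | (rw [dDC]; first | done | norm_num)
  · exact ⟨pA, by simp, pC, by simp, dAC⟩
lemma nonexist_part :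
    ¬ (∃ S : Finset (EuclideanSpace ℝ (Fin 2)), S.card = 4 ∧
      (∀ p ∈ S, ∀ q ∈ S, ∃ m : ℕ, dist p q = m) ∧
      ¬ Collinear ℝ (S : Set (EuclideanSpace ℝ (Fin 2))) ∧
      (∀ p ∈ S, ∀ q ∈ S, dist p q ≤ 3)) := by
  classical
  rintro ⟨S, hcard, hint, hncol, hle⟩
  rw [show (4:ℕ) = 3+1 from rfl, Finset.card_eq_succ] at hcard
  obtain ⟨p0, T, hp0T, hins, hT⟩ := hcard
  rw [Finset.card_eq_three] at hT
  obtain ⟨p1, p2, p3, h12, h13, h23, rfl⟩ := hT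
  subst hins
  have m0 : p0 ∈ insert p0 ({p1, p2, p3} : Finset (EuclideanSpace ℝ (Fin 2))) := by simp
  have m1 : p1 ∈ insert p0 ({p1, p2, p3} : Finset (EuclideanSpace ℝ (Fin 2))) := by simp
  have m2 : p2 ∈ insert p0 ({p1, p2, p3} : Finset (EuclideanSpace ℝ (Fin 2))) := by simp
  have m3 : p3 ∈ insert p0 ({p1, p2, p3} : Finset (EuclideanSpace ℝ (Fin 2))) := by simp
  have h01 : p1 ≠ p0 := fun h => hp0T (by simp [← h])
  have h02 : p2 ≠ p0 := fun h => hp0T (by simp [← h])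
  have h03 : p3 ≠ p0 := fun h => hp0T (by simp [← h])
  have get : ∀ p, p ∈ insert p0 ({p1, p2, p3} : Finset (EuclideanSpace ℝ (Fin 2))) →
      ∀ q, q ∈ insert p0 ({p1, p2, p3} : Finset (EuclideanSpace ℝ (Fin 2))) → p ≠ q →
      ∃ m : ℕ, 1 ≤ m ∧ m ≤ 3 ∧ dist p q = m := by
    intro p hp q hq hpq
    obtain ⟨m, hm⟩ := hint p hp q hq
    refine ⟨m, ?_, ?_, hm⟩
    · rcases Nat.eq_zero_or_pos m with h | h
      · rw [h] at hm; simp at hm; exact absurd hm hpq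
      · exact h
    · have h4 := hle p hp q hq
      rw [hm] at h4
      exact_mod_cast h4
  obtain ⟨a, ha1, ha3, hda⟩ := get p1 m1 p0 m0 h01
  obtain ⟨b, hb1, hb3, hdb⟩ := get p2 m2 p0 m0 h02
  obtain ⟨c, hc1, hc3, hdc⟩ := get p3 m3 p0 m0 h03
  obtain ⟨d, hd1, hd3, hdd⟩ := get p1 m1 p2 m2 h12
  obtain ⟨e, he1, he3, hde⟩ := get p1 m1 p3 m3 h13
  obtain ⟨f, hf1, hf3, hdf⟩ := get p2 m2 p3 m3 h23
  -- vectors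
  set v1 : EuclideanSpace ℝ (Fin 2) := p1 - p0 with hv1def
  set v2 : EuclideanSpace ℝ (Fin 2) := p2 - p0 with hv2def
  set v3 : EuclideanSpace ℝ (Fin 2) := p3 - p0 with hv3def
  have hn1 : ‖v1‖ = (a:ℝ) := by rw [hv1def, ← dist_eq_norm]; exact hda
  have hn2 : ‖v2‖ = (b:ℝ) := by rw [hv2def, ← dist_eq_norm]; exact hdb
  have hn3 : ‖v3‖ = (c:ℝ) := by rw [hv3def, ← dist_eq_norm]; exact hdc
  have hn12 : ‖v1 - v2‖ = (d:ℝ) := by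
    rw [hv1def, hv2def, sub_sub_sub_cancel_right, ← dist_eq_norm]; exact hdd
  have hn13 : ‖v1 - v3‖ = (e:ℝ) := by
    rw [hv1def, hv3def, sub_sub_sub_cancel_right, ← dist_eq_norm]; exact hde
  have hn23 : ‖v2 - v3‖ = (f:ℝ) := by
    rw [hv2def, hv3def, sub_sub_sub_cancel_right, ← dist_eq_norm]; exact hdf
  -- inner products
  have i11 : ⟪v1, v1⟫ = (a:ℝ)^2 := by rw [real_inner_self_eq_norm_sq, hn1]
  have i22 : ⟪v2, v2⟫ = (b:ℝ)^2 := by rw [real_inner_self_eq_norm_sq, hn2]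
  have i33 : ⟪v3, v3⟫ = (c:ℝ)^2 := by rw [real_inner_self_eq_norm_sq, hn3]
  have i12 : ⟪v1, v2⟫ = ((a:ℝ)^2 + (b:ℝ)^2 - (d:ℝ)^2)/2 := by
    have h := norm_sub_sq_real v1 v2
    rw [hn12, hn1, hn2] at h; linarith
  have i13 : ⟪v1, v3⟫ = ((a:ℝ)^2 + (c:ℝ)^2 - (e:ℝ)^2)/2 := by
    have h := norm_sub_sq_real v1 v3
    rw [hn13, hn1, hn3] at h; linarith
  have i23 : ⟪v2, v3⟫ = ((b:ℝ)^2 + (c:ℝ)^2 - (f:ℝ)^2)/2 := by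
    have h := norm_sub_sq_real v2 v3
    rw [hn23, hn2, hn3] at h; linarith
  have i21 : ⟪v2, v1⟫ = ((a:ℝ)^2 + (b:ℝ)^2 - (d:ℝ)^2)/2 := by rw [real_inner_comm]; exact i12
  have i31 : ⟪v3, v1⟫ = ((a:ℝ)^2 + (c:ℝ)^2 - (e:ℝ)^2)/2 := by rw [real_inner_comm]; exact i13
  have i32 : ⟪v3, v2⟫ = ((b:ℝ)^2 + (c:ℝ)^2 - (f:ℝ)^2)/2 := by rw [real_inner_comm]; exact i23
  -- Gram determinant
  have hdet := gram_det_zero ![v1, v2, v3]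
  rw [Matrix.det_fin_three] at hdet
  simp only [Matrix.of_apply, Matrix.cons_val', Matrix.cons_val_zero, Matrix.cons_val_one,
    Matrix.head_cons, Matrix.empty_val', Matrix.cons_val_fin_one, Matrix.head_fin_const,
    Matrix.cons_val_two, Matrix.tail_cons] at hdet
  rw [i11, i22, i33, i12, i13, i23, i21, i31, i32] at hdet
  -- integer determinant equation
  have hZ : 4*(a:ℤ)^2*(b:ℤ)^2*(c:ℤ)^2
      + ((a:ℤ)^2+(b:ℤ)^2-(d:ℤ)^2)*((a:ℤ)^2+(c:ℤ)^2-(e:ℤ)^2)*((b:ℤ)^2+(c:ℤ)^2-(f:ℤ)^2)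
      - (a:ℤ)^2*(((b:ℤ)^2+(c:ℤ)^2-(f:ℤ)^2)^2)
      - (b:ℤ)^2*(((a:ℤ)^2+(c:ℤ)^2-(e:ℤ)^2)^2)
      - (c:ℤ)^2*(((a:ℤ)^2+(b:ℤ)^2-(d:ℤ)^2)^2) = 0 := by
    have hR : ((4*(a:ℤ)^2*(b:ℤ)^2*(c:ℤ)^2
      + ((a:ℤ)^2+(b:ℤ)^2-(d:ℤ)^2)*((a:ℤ)^2+(c:ℤ)^2-(e:ℤ)^2)*((b:ℤ)^2+(c:ℤ)^2-(f:ℤ)^2)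
      - (a:ℤ)^2*(((b:ℤ)^2+(c:ℤ)^2-(f:ℤ)^2)^2)
      - (b:ℤ)^2*(((a:ℤ)^2+(c:ℤ)^2-(e:ℤ)^2)^2)
      - (c:ℤ)^2*(((a:ℤ)^2+(b:ℤ)^2-(d:ℤ)^2)^2) : ℤ) : ℝ) = 0 := by
      push_cast
      linear_combination (4:ℝ) * hdet
    exact_mod_cast hR
  have hk := key (a := (a:ℤ)) (b := (b:ℤ)) (c := (c:ℤ)) (d := (d:ℤ)) (e := (e:ℤ)) (f := (f:ℤ))
    (by exact_mod_cast ha1) (by exact_mod_cast ha3) (by exact_mod_cast hb1) (by exact_mod_cast hb3)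
    (by exact_mod_cast hc1) (by exact_mod_cast hc3) (by exact_mod_cast hd1) (by exact_mod_cast hd3)
    (by exact_mod_cast he1) (by exact_mod_cast he3) (by exact_mod_cast hf1) (by exact_mod_cast hf3)
  unfold Pkey at hk
  obtain ⟨hk1, hk2⟩ := hk hZ
  -- back to ℝ
  have hk1R : 4*(a:ℝ)^2*(b:ℝ)^2 = ((a:ℝ)^2+(b:ℝ)^2-(d:ℝ)^2)^2 := by exact_mod_cast hk1
  have hk2R : 4*(a:ℝ)^2*(c:ℝ)^2 = ((a:ℝ)^2+(c:ℝ)^2-(e:ℝ)^2)^2 := by exact_mod_cast hk2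
  have g12 : ⟪v1, v2⟫^2 = ‖v1‖^2 * ‖v2‖^2 := by
    rw [i12, hn1, hn2]; linear_combination -hk1R/4
  have g13 : ⟪v1, v3⟫^2 = ‖v1‖^2 * ‖v3‖^2 := by
    rw [i13, hn1, hn3]; linear_combination -hk2R/4
  have hv1ne : v1 ≠ 0 := sub_ne_zero.mpr h01
  obtain ⟨r, hr⟩ := dep_of_gram hv1ne g12
  obtain ⟨t, ht⟩ := dep_of_gram hv1ne g13
  apply hncol
  have hmem : p0 ∈ (↑(insert p0 ({p1, p2, p3} : Finset (EuclideanSpace ℝ (Fin 2)))) :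
      Set (EuclideanSpace ℝ (Fin 2))) := by simp
  rw [collinear_iff_of_mem hmem]
  refine ⟨v1, ?_⟩
  intro p hp
  simp only [Finset.coe_insert, Set.mem_insert_iff, Finset.coe_singleton,
    Set.mem_singleton_iff] at hp
  rcases hp with rfl | rfl | rfl | rfl
  · exact ⟨0, by simp⟩
  · refine ⟨1, ?_⟩
    rw [one_smul, hv1def, vadd_eq_add, sub_add_cancel]
  · refine ⟨r, ?_⟩
    rw [← hr, hv2def, vadd_eq_add, sub_add_cancel]
  · refine ⟨t, ?_⟩
    rw [← ht, hv3def, vadd_eq_add, sub_add_cancel]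

/-- The minimum possible diameter of a 4-point plane integral point set is `4`:
there exist 4 non-collinear points with pairwise integral distances and largest
distance `4`, and no such configuration has all pairwise distances at most `3`. -/
theorem min_diameter_four_points :
    (∃ S : Finset (EuclideanSpace ℝ (Fin 2)), S.card = 4 ∧
      (∀ p ∈ S, ∀ q ∈ S, ∃ m : ℕ, dist p q = m) ∧
      ¬ Collinear ℝ (S : Set (EuclideanSpace ℝ (Fin 2))) ∧
      (∀ p ∈ S, ∀ q ∈ S, dist p q ≤ 4) ∧
      (∃ p ∈ S, ∃ q ∈ S, dist p q = 4)) ∧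
    ¬ (∃ S : Finset (EuclideanSpace ℝ (Fin 2)), S.card = 4 ∧
      (∀ p ∈ S, ∀ q ∈ S, ∃ m : ℕ, dist p q = m) ∧
      ¬ Collinear ℝ (S : Set (EuclideanSpace ℝ (Fin 2))) ∧
      (∀ p ∈ S, ∀ q ∈ S, dist p q ≤ 3)) :=
  ⟨exist_part, nonexist_part⟩
end

section
/- There exist 7 points in the plane, no three collinear and no four concyclic, with all pairwise distances integers and maximum distance 22270. -/
noncomputable def pt (x t : ℚ) : EuclideanSpace ℝ (Fin 2) :=
  (WithLp.equiv 2 (Fin 2 → ℝ)).symm ![(x : ℝ), (t : ℝ) * Real.sqrt 2002]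

lemma pt_apply0 (x t : ℚ) : pt x t 0 = (x:ℝ) := rfl
lemma pt_apply1 (x t : ℚ) : pt x t 1 = (t:ℝ) * Real.sqrt 2002 := rfl

lemma pt_ne {x1 t1 x2 t2 : ℚ} (h : x1 ≠ x2) : pt x1 t1 ≠ pt x2 t2 := by
  intro he
  have h0 := congrArg (fun w => w 0) he
  simp only [pt_apply0] at h0
  exact h (by exact_mod_cast h0)

lemma sq_s : Real.sqrt 2002 ^ 2 = 2002 := Real.sq_sqrt (by norm_num)

lemma dist_pt (x1 t1 x2 t2 : ℚ) (m : ℕ)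
    (h : (x1 - x2)^2 + 2002*(t1 - t2)^2 = (m:ℚ)^2) :
    dist (pt x1 t1) (pt x2 t2) = m := by
  rw [EuclideanSpace.dist_eq]
  have key : ∑ i, dist (pt x1 t1 i) (pt x2 t2 i) ^ 2 = (m:ℝ)^2 := by
    simp only [Fin.sum_univ_two, pt_apply0, pt_apply1, Real.dist_eq, sq_abs]
    have h' : ((x1:ℝ) - x2)^2 + 2002*((t1:ℝ) - t2)^2 = (m:ℝ)^2 := by exact_mod_cast h
    calc ((x1:ℝ) - x2)^2 + ((t1:ℝ)*Real.sqrt 2002 - (t2:ℝ)*Real.sqrt 2002)^2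
        = ((x1:ℝ) - x2)^2 + ((t1:ℝ) - t2)^2 * Real.sqrt 2002 ^ 2 := by ring
      _ = (m:ℝ)^2 := by rw [sq_s]; linarith
  rw [key, Real.sqrt_sq (Nat.cast_nonneg m)]

lemma not_collinear_pt (x1 t1 x2 t2 x3 t3 : ℚ)
    (h : (x2-x1)*(t3-t1) - (t2-t1)*(x3-x1) ≠ 0) :
    ¬ Collinear ℝ ({pt x1 t1, pt x2 t2, pt x3 t3} : Set (EuclideanSpace ℝ (Fin 2))) := by
  intro hc
  rw [collinear_iff_of_mem (Set.mem_insert (pt x1 t1) _)] at hc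
  obtain ⟨v, hv⟩ := hc
  obtain ⟨a, ha⟩ := hv (pt x2 t2) (by simp)
  obtain ⟨b, hb⟩ := hv (pt x3 t3) (by simp)
  have ha0 := congrArg (fun w => w 0) ha
  have ha1 := congrArg (fun w => w 1) ha
  have hb0 := congrArg (fun w => w 0) hb
  have hb1 := congrArg (fun w => w 1) hb
  simp only [pt_apply0, pt_apply1, PiLp.add_apply, PiLp.smul_apply, smul_eq_mul,
    vadd_eq_add] at ha0 ha1 hb0 hb1
  set s := Real.sqrt 2002 with hs
  have hspos : 0 < s := Real.sqrt_pos.mpr (by norm_num)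
  have main : (((x2-x1)*(t3-t1) - (t2-t1)*(x3-x1) : ℚ) : ℝ) * s = 0 := by
    push_cast
    linear_combination ((t3:ℝ)*s - (t1:ℝ)*s) * ha0 + (a * (v 0)) * hb1
      - ((x3:ℝ) - (x1:ℝ)) * ha1 - (a * (v 1)) * hb0
  rcases mul_eq_zero.mp main with h0 | h0
  · exact h (by exact_mod_cast h0)
  · exact absurd h0 (ne_of_gt hspos)

lemma not_cospherical_pt (x1 t1 x2 t2 x3 t3 x4 t4 : ℚ)
    (h : ((x2^2+2002*t2^2)-(x1^2+2002*t1^2)) * ((x3-x1)*(t4-t1) - (x4-x1)*(t3-t1))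
       - ((x3^2+2002*t3^2)-(x1^2+2002*t1^2)) * ((x2-x1)*(t4-t1) - (x4-x1)*(t2-t1))
       + ((x4^2+2002*t4^2)-(x1^2+2002*t1^2)) * ((x2-x1)*(t3-t1) - (x3-x1)*(t2-t1)) ≠ 0) :
    ¬ EuclideanGeometry.Cospherical
        ({pt x1 t1, pt x2 t2, pt x3 t3, pt x4 t4} : Set (EuclideanSpace ℝ (Fin 2))) := by
  rintro ⟨c, R, hc⟩
  set s := Real.sqrt 2002 with hs
  have sqeq : ∀ (x t : ℚ), pt x t ∈ ({pt x1 t1, pt x2 t2, pt x3 t3, pt x4 t4} :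
      Set (EuclideanSpace ℝ (Fin 2))) →
      ((x:ℝ) - c 0)^2 + ((t:ℝ)*s - c 1)^2 = R^2 := by
    intro x t hm
    have hd := hc (pt x t) hm
    rw [EuclideanSpace.dist_eq] at hd
    have hnn : (0:ℝ) ≤ ∑ i, dist (pt x t i) (c i) ^ 2 :=
      Finset.sum_nonneg fun i _ => sq_nonneg _
    have := Real.sq_sqrt hnn
    rw [hd] at this
    rw [this]
    simp only [Fin.sum_univ_two, pt_apply0, pt_apply1, Real.dist_eq, sq_abs, hs]
  have e1 := sqeq x1 t1 (by simp)
  have e2 := sqeq x2 t2 (by simp)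
  have e3 := sqeq x3 t3 (by simp)
  have e4 := sqeq x4 t4 (by simp)
  apply h
  have key : ((((x2^2+2002*t2^2)-(x1^2+2002*t1^2)) * ((x3-x1)*(t4-t1) - (x4-x1)*(t3-t1))
       - ((x3^2+2002*t3^2)-(x1^2+2002*t1^2)) * ((x2-x1)*(t4-t1) - (x4-x1)*(t2-t1))
       + ((x4^2+2002*t4^2)-(x1^2+2002*t1^2)) * ((x2-x1)*(t3-t1) - (x3-x1)*(t2-t1)) : ℚ) : ℝ)
       = 0 := by
    have h2 : s^2 = 2002 := Real.sq_sqrt (by norm_num)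
    push_cast
    linear_combination
      (((x3:ℝ)-x1)*((t4:ℝ)-t1) - ((x4:ℝ)-x1)*((t3:ℝ)-t1)) * e2
      - (((x2:ℝ)-x1)*((t4:ℝ)-t1) - ((x4:ℝ)-x1)*((t2:ℝ)-t1)) * e3
      + (((x2:ℝ)-x1)*((t3:ℝ)-t1) - ((x3:ℝ)-x1)*((t2:ℝ)-t1)) * e4
      - ((((x3:ℝ)-x1)*((t4:ℝ)-t1) - ((x4:ℝ)-x1)*((t3:ℝ)-t1))
        - (((x2:ℝ)-x1)*((t4:ℝ)-t1) - ((x4:ℝ)-x1)*((t2:ℝ)-t1))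
        + (((x2:ℝ)-x1)*((t3:ℝ)-t1) - ((x3:ℝ)-x1)*((t2:ℝ)-t1))) * e1
      - ((((x3:ℝ)-x1)*((t4:ℝ)-t1) - ((x4:ℝ)-x1)*((t3:ℝ)-t1)) * ((t2:ℝ)^2)
        - (((x2:ℝ)-x1)*((t4:ℝ)-t1) - ((x4:ℝ)-x1)*((t2:ℝ)-t1)) * ((t3:ℝ)^2)
        + (((x2:ℝ)-x1)*((t3:ℝ)-t1) - ((x3:ℝ)-x1)*((t2:ℝ)-t1)) * ((t4:ℝ)^2)
        - ((((x3:ℝ)-x1)*((t4:ℝ)-t1) - ((x4:ℝ)-x1)*((t3:ℝ)-t1))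
          - (((x2:ℝ)-x1)*((t4:ℝ)-t1) - ((x4:ℝ)-x1)*((t2:ℝ)-t1))
          + (((x2:ℝ)-x1)*((t3:ℝ)-t1) - ((x3:ℝ)-x1)*((t2:ℝ)-t1))) * ((t1:ℝ)^2)) * h2
  exact_mod_cast key


set_option maxHeartbeats 4000000 in
/-- There exist 7 points in the plane, no three collinear and no four concyclic,
with pairwise integral distances and maximum distance `22270`. -/
theorem exists_seven_point_general_position_diameter_22270 :
    ∃ S : Finset (EuclideanSpace ℝ (Fin 2)), S.card = 7 ∧
      (∀ p ∈ S, ∀ q ∈ S, ∃ m : ℕ, dist p q = m) ∧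
      (∀ p ∈ S, ∀ q ∈ S, ∀ r ∈ S, p ≠ q → p ≠ r → q ≠ r →
        ¬ Collinear ℝ ({p, q, r} : Set (EuclideanSpace ℝ (Fin 2)))) ∧
      (∀ p ∈ S, ∀ q ∈ S, ∀ r ∈ S, ∀ s ∈ S,
        p ≠ q → p ≠ r → p ≠ s → q ≠ r → q ≠ s → r ≠ s →
        ¬ EuclideanGeometry.Cospherical ({p, q, r, s} : Set (EuclideanSpace ℝ (Fin 2)))) ∧
      (∀ p ∈ S, ∀ q ∈ S, dist p q ≤ 22270) ∧
      (∃ p ∈ S, ∃ q ∈ S, dist p q = 22270) := by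
  classical
  have key : ∀ p ∈ ({pt 0 0, pt 22270 0, pt (133227/17) (3144/17), pt (30516246/2227) (-54168/2227), pt (31979322/2227) (238464/2227), pt (322522/17) (3144/17), pt (23468272/2227) (932064/2227)} : Finset (EuclideanSpace ℝ (Fin 2))), ∀ q ∈ ({pt 0 0, pt 22270 0, pt (133227/17) (3144/17), pt (30516246/2227) (-54168/2227), pt (31979322/2227) (238464/2227), pt (322522/17) (3144/17), pt (23468272/2227) (932064/2227)} : Finset (EuclideanSpace ℝ (Fin 2))), ∃ m : ℕ, m ≤ 22270 ∧ dist p q = (m:ℝ) := by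
    intro p hp q hq
    simp only [Finset.mem_insert, Finset.mem_singleton] at hp hq
    rcases hp with rfl|rfl|rfl|rfl|rfl|rfl|rfl <;> rcases hq with rfl|rfl|rfl|rfl|rfl|rfl|rfl
    · exact ⟨0, by norm_num, by simp⟩
    · exact ⟨22270, by norm_num, dist_pt _ _ _ _ _ (by norm_num)⟩
    · exact ⟨11397, by norm_num, dist_pt _ _ _ _ _ (by norm_num)⟩
    · exact ⟨13746, by norm_num, dist_pt _ _ _ _ _ (by norm_num)⟩
    · exact ⟨15138, by norm_num, dist_pt _ _ _ _ _ (by norm_num)⟩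
    · exact ⟨20698, by norm_num, dist_pt _ _ _ _ _ (by norm_num)⟩
    · exact ⟨21488, by norm_num, dist_pt _ _ _ _ _ (by norm_num)⟩
    · exact ⟨22270, by norm_num, dist_pt _ _ _ _ _ (by norm_num)⟩
    · exact ⟨0, by norm_num, by simp⟩
    · exact ⟨16637, by norm_num, dist_pt _ _ _ _ _ (by norm_num)⟩
    · exact ⟨8636, by norm_num, dist_pt _ _ _ _ _ (by norm_num)⟩
    · exact ⟨9248, by norm_num, dist_pt _ _ _ _ _ (by norm_num)⟩
    · exact ⟨8908, by norm_num, dist_pt _ _ _ _ _ (by norm_num)⟩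
    · exact ⟨22098, by norm_num, dist_pt _ _ _ _ _ (by norm_num)⟩
    · exact ⟨11397, by norm_num, dist_pt _ _ _ _ _ (by norm_num)⟩
    · exact ⟨16637, by norm_num, dist_pt _ _ _ _ _ (by norm_num)⟩
    · exact ⟨0, by norm_num, by simp⟩
    · exact ⟨11049, by norm_num, dist_pt _ _ _ _ _ (by norm_num)⟩
    · exact ⟨7395, by norm_num, dist_pt _ _ _ _ _ (by norm_num)⟩
    · exact ⟨11135, by norm_num, dist_pt _ _ _ _ _ (by norm_num)⟩
    · exact ⟨10795, by norm_num, dist_pt _ _ _ _ _ (by norm_num)⟩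
    · exact ⟨13746, by norm_num, dist_pt _ _ _ _ _ (by norm_num)⟩
    · exact ⟨8636, by norm_num, dist_pt _ _ _ _ _ (by norm_num)⟩
    · exact ⟨11049, by norm_num, dist_pt _ _ _ _ _ (by norm_num)⟩
    · exact ⟨0, by norm_num, by simp⟩
    · exact ⟨5916, by norm_num, dist_pt _ _ _ _ _ (by norm_num)⟩
    · exact ⟨10744, by norm_num, dist_pt _ _ _ _ _ (by norm_num)⟩
    · exact ⟨20066, by norm_num, dist_pt _ _ _ _ _ (by norm_num)⟩
    · exact ⟨15138, by norm_num, dist_pt _ _ _ _ _ (by norm_num)⟩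
    · exact ⟨9248, by norm_num, dist_pt _ _ _ _ _ (by norm_num)⟩
    · exact ⟨7395, by norm_num, dist_pt _ _ _ _ _ (by norm_num)⟩
    · exact ⟨5916, by norm_num, dist_pt _ _ _ _ _ (by norm_num)⟩
    · exact ⟨0, by norm_num, by simp⟩
    · exact ⟨5780, by norm_num, dist_pt _ _ _ _ _ (by norm_num)⟩
    · exact ⟨14450, by norm_num, dist_pt _ _ _ _ _ (by norm_num)⟩
    · exact ⟨20698, by norm_num, dist_pt _ _ _ _ _ (by norm_num)⟩
    · exact ⟨8908, by norm_num, dist_pt _ _ _ _ _ (by norm_num)⟩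
    · exact ⟨11135, by norm_num, dist_pt _ _ _ _ _ (by norm_num)⟩
    · exact ⟨10744, by norm_num, dist_pt _ _ _ _ _ (by norm_num)⟩
    · exact ⟨5780, by norm_num, dist_pt _ _ _ _ _ (by norm_num)⟩
    · exact ⟨0, by norm_num, by simp⟩
    · exact ⟨13430, by norm_num, dist_pt _ _ _ _ _ (by norm_num)⟩
    · exact ⟨21488, by norm_num, dist_pt _ _ _ _ _ (by norm_num)⟩
    · exact ⟨22098, by norm_num, dist_pt _ _ _ _ _ (by norm_num)⟩
    · exact ⟨10795, by norm_num, dist_pt _ _ _ _ _ (by norm_num)⟩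
    · exact ⟨20066, by norm_num, dist_pt _ _ _ _ _ (by norm_num)⟩
    · exact ⟨14450, by norm_num, dist_pt _ _ _ _ _ (by norm_num)⟩
    · exact ⟨13430, by norm_num, dist_pt _ _ _ _ _ (by norm_num)⟩
    · exact ⟨0, by norm_num, by simp⟩
  refine ⟨{pt 0 0, pt 22270 0, pt (133227/17) (3144/17), pt (30516246/2227) (-54168/2227), pt (31979322/2227) (238464/2227), pt (322522/17) (3144/17), pt (23468272/2227) (932064/2227)}, ?_, ?_, ?_, ?_, ?_, ?_⟩
  · rw [Finset.card_insert_of_notMem (by simp only [Finset.mem_insert, Finset.mem_singleton, not_or]; exact ⟨pt_ne (by norm_num), pt_ne (by norm_num), pt_ne (by norm_num), pt_ne (by norm_num), pt_ne (by norm_num), pt_ne (by norm_num)⟩)]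
    rw [Finset.card_insert_of_notMem (by simp only [Finset.mem_insert, Finset.mem_singleton, not_or]; exact ⟨pt_ne (by norm_num), pt_ne (by norm_num), pt_ne (by norm_num), pt_ne (by norm_num), pt_ne (by norm_num)⟩)]
    rw [Finset.card_insert_of_notMem (by simp only [Finset.mem_insert, Finset.mem_singleton, not_or]; exact ⟨pt_ne (by norm_num), pt_ne (by norm_num), pt_ne (by norm_num), pt_ne (by norm_num)⟩)]
    rw [Finset.card_insert_of_notMem (by simp only [Finset.mem_insert, Finset.mem_singleton, not_or]; exact ⟨pt_ne (by norm_num), pt_ne (by norm_num), pt_ne (by norm_num)⟩)]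
    rw [Finset.card_insert_of_notMem (by simp only [Finset.mem_insert, Finset.mem_singleton, not_or]; exact ⟨pt_ne (by norm_num), pt_ne (by norm_num)⟩)]
    rw [Finset.card_insert_of_notMem (by simp only [Finset.mem_singleton]; exact pt_ne (by norm_num))]
    rw [Finset.card_singleton]
  · exact fun p hp q hq => (key p hp q hq).elim fun m hm => ⟨m, hm.2⟩
  · intro p hp q hq r hr hpq hpr hqr
    simp only [Finset.mem_insert, Finset.mem_singleton] at hp hq hr
    rcases hp with rfl|rfl|rfl|rfl|rfl|rfl|rfl <;> rcases hq with rfl|rfl|rfl|rfl|rfl|rfl|rfl <;>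
      rcases hr with rfl|rfl|rfl|rfl|rfl|rfl|rfl <;>
      first
        | exact absurd rfl hpq
        | exact absurd rfl hpr
        | exact absurd rfl hqr
        | (apply not_collinear_pt; norm_num)
  · intro p hp q hq r hr s' hs' hpq hpr hps hqr hqs hrs
    simp only [Finset.mem_insert, Finset.mem_singleton] at hp hq hr hs'
    rcases hp with rfl|rfl|rfl|rfl|rfl|rfl|rfl <;> rcases hq with rfl|rfl|rfl|rfl|rfl|rfl|rfl <;>
      rcases hr with rfl|rfl|rfl|rfl|rfl|rfl|rfl <;> rcases hs' with rfl|rfl|rfl|rfl|rfl|rfl|rfl <;>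
      first
        | exact absurd rfl hpq
        | exact absurd rfl hpr
        | exact absurd rfl hps
        | exact absurd rfl hqr
        | exact absurd rfl hqs
        | exact absurd rfl hrs
        | (apply not_cospherical_pt; norm_num)
  · intro p hp q hq
    obtain ⟨m, hm1, hm2⟩ := key p hp q hq
    rw [hm2]
    exact_mod_cast hm1
  · exact ⟨pt 0 0, by simp, pt 22270 0, by simp [Finset.mem_insert], (dist_pt 0 0 22270 0 22270 (by norm_num)).trans (by norm_num)⟩
end

section
/- The number of distinct characteristics occurring among integral triangles with diameter d is Ω(d²/(log d)²): there is a constant c > 0 such that for all sufficiently large d, at least c·d²/(log d)² distinct squarefree integers arise as characteristics of integral triangles with largest side d. -/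
/-- The set of characteristics (squarefree parts of `(a+b+c)(a+b-c)(a-b+c)(-a+b+c)`)
of non-degenerate integral triangles with largest side exactly `d`. -/
def charSet (d : ℕ) : Set ℕ :=
  {k | Squarefree k ∧ ∃ b c : ℕ, 0 < c ∧ c ≤ b ∧ b ≤ d ∧ d < b + c ∧
    ∃ w : ℕ, 0 < w ∧
      ((d : ℤ) + b + c) * ((d : ℤ) + b - c) * ((d : ℤ) - b + c) * (-(d : ℤ) + b + c)
        = (k : ℤ) * (w : ℤ) ^ 2}

open Finset Nat Filter Asymptotics

noncomputable def sfp (n : ℕ) : ℕ := (Nat.sq_mul_squarefree n).choose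
noncomputable def sfw (n : ℕ) : ℕ := (Nat.sq_mul_squarefree n).choose_spec.choose

lemma sfp_spec (n : ℕ) : (sfw n) ^ 2 * sfp n = n ∧ Squarefree (sfp n) :=
  (Nat.sq_mul_squarefree n).choose_spec.choose_spec

lemma sfp_squarefree (n : ℕ) : Squarefree (sfp n) := (sfp_spec n).2

lemma sfp_dvd (n : ℕ) : sfp n ∣ n := Dvd.intro_left _ (sfp_spec n).1

lemma sfw_pos {n : ℕ} (hn : n ≠ 0) : 0 < sfw n := by
  rcases Nat.eq_zero_or_pos (sfw n) with h | h
  · exfalso; apply hn; rw [← (sfp_spec n).1, h]; ring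
  · exact h

lemma sfp_ne_zero {n : ℕ} (hn : n ≠ 0) : sfp n ≠ 0 := by
  intro h; apply hn; rw [← (sfp_spec n).1, h, mul_zero]

lemma dvd_sfp {r n : ℕ} (hr : r.Prime) (hn : n ≠ 0) (h : Odd (n.factorization r)) :
    r ∣ sfp n := by
  have h1 := (sfp_spec n).1
  have hw : sfw n ≠ 0 := (sfw_pos hn).ne'
  have hk : sfp n ≠ 0 := sfp_ne_zero hn
  have : n.factorization r = 2 * (sfw n).factorization r + (sfp n).factorization r := by
    conv_lhs => rw [← h1]
    rw [Nat.factorization_mul (by positivity) hk, Nat.factorization_pow]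
    simp [mul_comm]
  rw [this] at h
  have hodd : Odd ((sfp n).factorization r) := by
    rcases Nat.even_or_odd ((sfp n).factorization r) with he | ho
    · exact absurd h (by simp [Nat.even_add, he, parity_simps])
    · exact ho
  have : 1 ≤ (sfp n).factorization r := hodd.pos
  exact (Nat.Prime.dvd_iff_one_le_factorization hr hk).mpr this

/-- number of primes in (n, 2n] -/
def K (n : ℕ) : ℕ := ((Finset.Ioc n (2 * n)).filter Nat.Prime).card

theorem cb_le (n : ℕ) (n_large : 2 < n) :
    Nat.centralBinom n ≤ (2 * n) ^ Nat.sqrt (2 * n) * 4 ^ (2 * n / 3) * (2 * n) ^ K n := by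
  have n_pos : 0 < n := by omega
  have n2_pos : 1 ≤ 2 * n := by omega
  set f : ℕ → ℕ := fun x => x ^ n.centralBinom.factorization x with hf
  set T := (Finset.range (2 * n + 1)).filter Nat.Prime with hT
  have h1 : ∏ x ∈ T, f x = Nat.centralBinom n := by
    rw [hT, Finset.prod_filter_of_ne, Nat.prod_pow_factorization_centralBinom]
    intro p _ h
    contrapose! h
    dsimp only [f]
    rw [Nat.factorization_eq_zero_of_not_prime n.centralBinom h, _root_.pow_zero]
  rw [← h1, ← Finset.prod_filter_mul_prod_filter_not T (· ≤ 2 * n / 3)]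
  refine Nat.mul_le_mul ?_ ?_
  · -- small primes part, as in Bertrand
    have hTS : T.filter (· ≤ 2 * n / 3) = (Finset.range (2 * n / 3 + 1)).filter Nat.Prime := by
      ext p
      simp only [hT, Finset.mem_filter, Finset.mem_range]
      constructor
      · rintro ⟨⟨h1, h2⟩, h3⟩; exact ⟨by omega, h2⟩
      · rintro ⟨h1, h2⟩
        refine ⟨⟨by omega, h2⟩, by omega⟩
    rw [hTS]
    set S := (Finset.range (2 * n / 3 + 1)).filter Nat.Prime with hS
    rw [← Finset.prod_filter_mul_prod_filter_not S (· ≤ Nat.sqrt (2 * n))]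
    apply Nat.mul_le_mul
    · refine (Finset.prod_le_prod' fun p _ => (?_ : f p ≤ 2 * n)).trans ?_
      · exact Nat.pow_factorization_choose_le (by omega)
      have hcard : (Finset.Icc 1 (Nat.sqrt (2 * n))).card = Nat.sqrt (2 * n) := by
        rw [Nat.card_Icc, Nat.add_sub_cancel]
      rw [Finset.prod_const]
      refine pow_right_mono₀ n2_pos ((Finset.card_le_card fun x hx => ?_).trans hcard.le)
      obtain ⟨h1, h2⟩ := Finset.mem_filter.1 hx
      exact Finset.mem_Icc.mpr ⟨(Finset.mem_filter.1 h1).2.one_lt.le, h2⟩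
    · refine le_trans ?_ (primorial_le_4_pow (2 * n / 3))
      refine (Finset.prod_le_prod' fun p hp => (?_ : f p ≤ p)).trans ?_
      · obtain ⟨h1, h2⟩ := Finset.mem_filter.1 hp
        refine (pow_right_mono₀ (Finset.mem_filter.1 h1).2.one_lt.le ?_).trans (pow_one p).le
        exact Nat.factorization_choose_le_one (Nat.sqrt_lt'.mp <| not_le.1 h2)
      refine Finset.prod_le_prod_of_subset_of_one_le' (Finset.filter_subset _ _) ?_
      exact fun p hp _ => (Finset.mem_filter.1 hp).2.one_lt.le
  · -- large primes part
    rw [← Finset.prod_filter_mul_prod_filter_not (T.filter (¬ · ≤ 2 * n / 3)) (· ≤ n)]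
    have hmid : ∏ x ∈ (T.filter (¬ · ≤ 2 * n / 3)).filter (· ≤ n), f x = 1 := by
      apply Finset.prod_eq_one
      intro p hp
      simp only [Finset.mem_filter, hT, Finset.mem_range] at hp
      obtain ⟨⟨⟨hlt, hprime⟩, h23⟩, hpn⟩ := hp
      dsimp only [f]
      rw [Nat.factorization_centralBinom_of_two_mul_self_lt_three_mul n_large hpn (by omega),
        _root_.pow_zero]
    rw [hmid, one_mul]
    have hbig : (T.filter (¬ · ≤ 2 * n / 3)).filter (¬ · ≤ n)
        = (Finset.Ioc n (2 * n)).filter Nat.Prime := by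
      ext p
      simp only [Finset.mem_filter, hT, Finset.mem_range, Finset.mem_Ioc]
      constructor
      · rintro ⟨⟨⟨h1, h2⟩, h3⟩, h4⟩; exact ⟨⟨by omega, by omega⟩, h2⟩
      · rintro ⟨⟨h1, h2⟩, h3⟩
        have := h3.two_le
        refine ⟨⟨⟨by omega, h3⟩, by omega⟩, by omega⟩
    rw [hbig]
    apply Finset.prod_le_pow_card
    intro p hp
    exact Nat.pow_factorization_choose_le (by omega)

-- the little-o fact
lemma littleo_fact :
    (fun x : ℝ => Real.log x + Real.sqrt (2 * x) * Real.log (2 * x)) =o[atTop] (id : ℝ → ℝ) := by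
  have h1 : Real.log =o[atTop] (id : ℝ → ℝ) := Real.isLittleO_log_id_atTop
  have hg : (fun y : ℝ => Real.sqrt y * Real.log y) =o[atTop] (id : ℝ → ℝ) := by
    have hlog : Real.log =o[atTop] (fun y : ℝ => y ^ (1/2 : ℝ)) :=
      isLittleO_log_rpow_atTop (by norm_num)
    have hsqrt : (fun y : ℝ => Real.sqrt y) =O[atTop] (fun y : ℝ => y ^ (1/2 : ℝ)) := by
      apply Filter.EventuallyEq.isBigO
      filter_upwards [eventually_ge_atTop (0:ℝ)] with y hy
      rw [Real.sqrt_eq_rpow]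
    have hmul := hsqrt.mul_isLittleO hlog
    refine hmul.trans_eventuallyEq ?_
    filter_upwards [eventually_gt_atTop (0:ℝ)] with y hy
    simp only [id_eq]
    rw [← Real.rpow_add hy]
    norm_num
  have h2 : (fun x : ℝ => Real.sqrt (2 * x) * Real.log (2 * x)) =o[atTop] (id : ℝ → ℝ) := by
    have hcomp : (fun x : ℝ => Real.sqrt (2 * x) * Real.log (2 * x))
        =o[atTop] (fun x : ℝ => 2 * x) := by
      have ht : Tendsto (fun x : ℝ => 2 * x) atTop atTop :=
        (tendsto_id.const_mul_atTop (by norm_num))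
      exact hg.comp_tendsto ht
    refine hcomp.trans_isBigO ?_
    exact (isBigO_const_mul_self (2:ℝ) _ atTop)
  exact h1.add h2

theorem K_lower : ∀ᶠ n : ℕ in atTop, (0.2 : ℝ) * n / Real.log n ≤ (K n : ℝ) := by
  have heps := littleo_fact.def (by norm_num : (0:ℝ) < 0.06)
  have hnat : ∀ᶠ n : ℕ in atTop,
      Real.log (n:ℝ) + Real.sqrt (2 * n) * Real.log (2 * n) ≤ 0.06 * n := by
    have := (tendsto_natCast_atTop_atTop (R := ℝ)).eventually heps
    filter_upwards [this, eventually_ge_atTop 1] with n hn hn1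
    have hx : (1:ℝ) ≤ (n:ℝ) := by exact_mod_cast hn1
    have h2x : (0:ℝ) ≤ 2 * n := by linarith
    have hlogpos : 0 ≤ Real.log (n:ℝ) := Real.log_nonneg hx
    have hlog2pos : 0 ≤ Real.log (2 * (n:ℝ)) := Real.log_nonneg (by linarith)
    have hsq : 0 ≤ Real.sqrt (2 * (n:ℝ)) := Real.sqrt_nonneg _
    have habs : ‖Real.log (n:ℝ) + Real.sqrt (2 * n) * Real.log (2 * n)‖
        = Real.log (n:ℝ) + Real.sqrt (2 * n) * Real.log (2 * n) := by
      rw [Real.norm_eq_abs, abs_of_nonneg]; positivity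
    rw [habs] at hn
    calc Real.log (n:ℝ) + Real.sqrt (2 * n) * Real.log (2 * n) ≤ 0.06 * ‖id (n:ℝ)‖ := hn
    _ = 0.06 * n := by rw [id_eq, Real.norm_eq_abs, abs_of_nonneg (by linarith)]
  filter_upwards [hnat, eventually_ge_atTop 16] with n hsmall hn16
  have n_large : 2 < n := by omega
  -- natural number chain: 4^n < n * (stuff)
  have H2 : 4 ^ n < n * Nat.centralBinom n :=
    Nat.four_pow_lt_mul_centralBinom n (by omega)
  have H : 4 ^ n ≤ n * ((2 * n) ^ Nat.sqrt (2 * n) * 4 ^ (2 * n / 3) * (2 * n) ^ K n) :=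
    le_trans H2.le (Nat.mul_le_mul_left n (cb_le n n_large))
  -- move to reals and take logs
  have hR : (4:ℝ) ^ n ≤ (n:ℝ) * ((2 * n) ^ Nat.sqrt (2 * n) * 4 ^ (2 * n / 3) * (2 * n) ^ K n) := by
    exact_mod_cast H
  have hnR : (16:ℝ) ≤ (n:ℝ) := by exact_mod_cast hn16
  have h2n_pos : (0:ℝ) < 2 * n := by linarith
  have hlog2n : (0:ℝ) < Real.log (2 * n) := Real.log_pos (by linarith)
  have hlogn : (0:ℝ) < Real.log n := Real.log_pos (by linarith)
  have hlog : (n:ℝ) * Real.log 4 ≤ Real.log n + (Nat.sqrt (2*n) : ℝ) * Real.log (2*n)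
      + (2 * n / 3 : ℕ) * Real.log 4 + (K n : ℝ) * Real.log (2*n) := by
    have hlhs : Real.log ((4:ℝ) ^ n) = (n:ℝ) * Real.log 4 := by
      rw [Real.log_pow]
    have hrhs : Real.log ((n:ℝ) * ((2 * n) ^ Nat.sqrt (2 * n) * 4 ^ (2 * n / 3) * (2 * n) ^ K n))
        = Real.log n + ((Nat.sqrt (2*n) : ℝ) * Real.log (2*n)
          + (2 * n / 3 : ℕ) * Real.log 4 + (K n : ℝ) * Real.log (2*n)) := by
      rw [Real.log_mul (by positivity) (by positivity), Real.log_mul (by positivity) (by positivity),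
        Real.log_mul (by positivity) (by positivity), Real.log_pow, Real.log_pow, Real.log_pow]
      try push_cast
      try ring
    have := Real.log_le_log (by positivity) hR
    rw [hlhs, hrhs] at this
    linarith
  -- bound the nat-div and nat-sqrt terms
  have hdiv : ((2 * n / 3 : ℕ) : ℝ) ≤ 2 * (n:ℝ) / 3 := by
    have := Nat.cast_div_le (m := 2 * n) (n := 3) (α := ℝ)
    push_cast at this ⊢
    linarith
  have hsqrt : ((Nat.sqrt (2*n) : ℕ) : ℝ) ≤ Real.sqrt (2 * n) := by
    have := Real.nat_sqrt_le_real_sqrt (a := 2 * n)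
    push_cast at this ⊢
    convert this using 2
    try push_cast
    try ring
  have hlog4 : Real.log 4 = 2 * Real.log 2 := by
    rw [show (4:ℝ) = 2 ^ 2 by norm_num, Real.log_pow]
    push_cast; ring
  have hlog2 : (0.6931471803 : ℝ) < Real.log 2 := Real.log_two_gt_d9
  -- derive K * log(2n) ≥ 0.4 n
  have hKlog : (0.4 : ℝ) * n ≤ (K n : ℝ) * Real.log (2 * n) := by
    have e1 : (Nat.sqrt (2*n) : ℝ) * Real.log (2*n) ≤ Real.sqrt (2*(n:ℝ)) * Real.log (2*n) := by
      apply mul_le_mul_of_nonneg_right hsqrt hlog2n.le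
    nlinarith [hsmall, hlog, hdiv, hlog2, e1]
  -- conclude
  have hlog2n_le : Real.log (2 * n) ≤ 2 * Real.log n := by
    rw [Real.log_mul (by norm_num) (by positivity)]
    have : Real.log 2 ≤ Real.log n := Real.log_le_log (by norm_num) (by linarith)
    linarith
  rw [div_le_iff₀ hlogn]
  have h1 : (K n : ℝ) * Real.log (2*n) ≤ (K n : ℝ) * (2 * Real.log n) := by
    apply mul_le_mul_of_nonneg_left hlog2n_le (by positivity)
  nlinarith

/-- the product appearing for the triangle built from `p`, `q`. -/
def Ngp (d p q : ℕ) : ℕ := p * q * (2*d + p) * (2*d - q)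

lemma card_primeFactors_filter_lt {M m j : ℕ} (hM : M ≠ 0) (h : M < (m+1)^j) :
    ((M.primeFactors).filter (fun r => m < r)).card < j := by
  by_contra hc
  push_neg at hc
  obtain ⟨t, ht, hcard⟩ := Finset.exists_subset_card_eq hc
  have hdvd : (∏ r ∈ t, r) ∣ M := by
    refine dvd_trans (Finset.prod_dvd_prod_of_subset t M.primeFactors _ ?_) M.prod_primeFactors_dvd
    exact ht.trans (Finset.filter_subset _ _)
  have hle : (m+1)^j ≤ ∏ r ∈ t, r := by
    rw [← hcard, ← Finset.prod_const]
    refine Finset.prod_le_prod' fun r hr => ?_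
    have := (Finset.mem_filter.mp (ht hr)).2
    omega
  have := Nat.le_of_dvd (Nat.pos_of_ne_zero hM) hdvd
  omega

section GoodPair

variable {d p q : ℕ} (hd : 100000 ≤ d) (hp : p.Prime) (hq : q.Prime)
  (hp1 : d/4 < p) (hp2 : p ≤ d/2) (hq1 : d/2 < q) (hq2 : q ≤ d)
  (h1 : ¬ p ∣ 2*d) (h2 : ¬ q ∣ 2*d) (h3 : ¬ p ∣ (2*d - q)) (h4 : ¬ q ∣ (2*d + p))

set_option linter.unusedSectionVars false

include hd hp hq hp1 hp2 hq1 hq2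

lemma Ngp_ne_zero : Ngp d p q ≠ 0 := by
  unfold Ngp
  have : 2 ≤ p := hp.two_le
  have : 2 ≤ q := hq.two_le
  have e1 : 0 < 2*d - q := by omega
  positivity

include h1 h3 in
lemma Ngp_odd_p : Odd ((Ngp d p q).factorization p) := by
  have hpq : p ≠ q := by omega
  have hq0 : q ≠ 0 := hq.pos.ne'
  have hp0 : p ≠ 0 := hp.pos.ne'
  have h2dq : 2*d - q ≠ 0 := by omega
  have h2dp : 2*d + p ≠ 0 := by omega
  have hv : (Ngp d p q).factorization p
      = p.factorization p + q.factorization p + (2*d+p).factorization p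
        + (2*d-q).factorization p := by
    unfold Ngp
    rw [Nat.factorization_mul (by positivity) h2dq,
      Nat.factorization_mul (by positivity) h2dp,
      Nat.factorization_mul hp0 hq0]
    simp
  have e1 : p.factorization p = 1 := hp.factorization_self
  have e2 : q.factorization p = 0 := by
    apply Nat.factorization_eq_zero_of_not_dvd
    intro hdd
    exact hpq ((Nat.prime_dvd_prime_iff_eq hp hq).mp hdd)
  have e3 : (2*d+p).factorization p = 0 := by
    apply Nat.factorization_eq_zero_of_not_dvd
    intro hdd
    exact h1 (by simpa using (Nat.dvd_sub hdd (dvd_refl p)))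
  have e4 : (2*d-q).factorization p = 0 := Nat.factorization_eq_zero_of_not_dvd h3
  rw [hv, e1, e2, e3, e4]
  decide

include h2 h4 in
lemma Ngp_odd_q : Odd ((Ngp d p q).factorization q) := by
  have hq0 : q ≠ 0 := hq.pos.ne'
  have hp0 : p ≠ 0 := hp.pos.ne'
  have h2dq : 2*d - q ≠ 0 := by omega
  have h2dp : 2*d + p ≠ 0 := by omega
  have hv : (Ngp d p q).factorization q
      = p.factorization q + q.factorization q + (2*d+p).factorization q
        + (2*d-q).factorization q := by
    unfold Ngp
    rw [Nat.factorization_mul (by positivity) h2dq,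
      Nat.factorization_mul (by positivity) h2dp,
      Nat.factorization_mul hp0 hq0]
    simp
  have e1 : q.factorization q = 1 := hq.factorization_self
  have e2 : p.factorization q = 0 := by
    apply Nat.factorization_eq_zero_of_not_dvd
    intro hdd
    have := Nat.le_of_dvd hp.pos hdd
    omega
  have e3 : (2*d+p).factorization q = 0 := Nat.factorization_eq_zero_of_not_dvd h4
  have e4 : (2*d-q).factorization q = 0 := by
    apply Nat.factorization_eq_zero_of_not_dvd
    intro hdd
    apply h2
    have : q ∣ (2*d - q) + q := Nat.dvd_add hdd (dvd_refl q)
    rwa [Nat.sub_add_cancel (by omega)] at this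
  rw [hv, e1, e2, e3, e4]
  decide

lemma Ngp_le : Ngp d p q ≤ 6 * d^4 := by
  have hb : p * q * (2*d + p) * (2*d - q) ≤ d * d * (3*d) * (2*d) := by
    gcongr <;> omega
  calc Ngp d p q ≤ d * d * (3*d) * (2*d) := hb
  _ = 6 * d^4 := by ring

include h1 h2 h3 h4 in
lemma Ngp_mem_charSet : sfp (Ngp d p q) ∈ charSet d := by
  have hNne : Ngp d p q ≠ 0 := Ngp_ne_zero hd hp hq hp1 hp2 hq1 hq2
  have hw := (sfp_spec (Ngp d p q)).1
  have hwpos : 0 < sfw (Ngp d p q) := sfw_pos hNne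
  -- p and q are odd
  have hpodd : Odd p := hp.odd_of_ne_two (by omega)
  have hqodd : Odd q := hq.odd_of_ne_two (by omega)
  obtain ⟨a, ha⟩ := hpodd
  obtain ⟨e, he⟩ := hqodd
  refine ⟨sfp_squarefree _, d - (e - a), a + e + 1, by omega, by omega, by omega, by omega,
    sfw (Ngp d p q), hwpos, ?_⟩
  have hea : a ≤ e := by omega
  have head : e - a ≤ d := by omega
  have hcast1 : ((d - (e - a) : ℕ) : ℤ) = (d:ℤ) - ((e:ℤ) - (a:ℤ)) := by
    push_cast [Nat.cast_sub head, Nat.cast_sub hea]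
    ring
  have hpz : (p:ℤ) = 2*a+1 := by exact_mod_cast ha
  have hqz : (q:ℤ) = 2*e+1 := by exact_mod_cast he
  have f1 : (d:ℤ) + (d - (e - a) : ℕ) + (a + e + 1 : ℕ) = 2*d + p := by
    push_cast [hcast1]; omega
  have f2 : (d:ℤ) + (d - (e - a) : ℕ) - (a + e + 1 : ℕ) = 2*d - q := by
    push_cast [hcast1]; omega
  have f3 : (d:ℤ) - (d - (e - a) : ℕ) + (a + e + 1 : ℕ) = q := by
    push_cast [hcast1]; omega
  have f4 : -(d:ℤ) + (d - (e - a) : ℕ) + (a + e + 1 : ℕ) = p := by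
    push_cast [hcast1]; omega
  rw [f1, f2, f3, f4]
  have e6 : (Ngp d p q : ℤ) = (2*(d:ℤ)+p) * (2*(d:ℤ)-q) * q * p := by
    unfold Ngp
    push_cast [Nat.cast_sub (show q ≤ 2*d by omega)]
    ring
  have e5 : (Ngp d p q : ℤ) = (sfp (Ngp d p q) : ℤ) * (sfw (Ngp d p q) : ℤ)^2 := by
    conv_lhs => rw [← hw]
    push_cast
    ring
  rw [← e6, e5]

end GoodPair

lemma charSet_finite (d : ℕ) : (charSet d).Finite := by
  apply Set.Finite.subset (Set.finite_Icc 0 (12 * d^4))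
  rintro k ⟨hsq, b, c, hc, hcb, hbd, hdbc, w, hw, heq⟩
  simp only [Set.mem_Icc]
  refine ⟨Nat.zero_le _, ?_⟩
  have hb1 : (0:ℤ) ≤ (d:ℤ) + b + c := by positivity
  have hb2 : (0:ℤ) ≤ (d:ℤ) + b - c := by
    have : (c:ℤ) ≤ b := by exact_mod_cast hcb
    have : (0:ℤ) ≤ (d:ℤ) := by positivity
    linarith
  have hb3 : (0:ℤ) ≤ (d:ℤ) - b + c := by
    have : (b:ℤ) ≤ d := by exact_mod_cast hbd
    have : (0:ℤ) ≤ (c:ℤ) := by positivity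
    linarith
  have hb4 : (0:ℤ) ≤ -(d:ℤ) + b + c := by
    have : (d:ℤ) < b + c := by exact_mod_cast hdbc
    linarith
  have hcd : (c:ℤ) ≤ d := by
    have h1 : (c:ℤ) ≤ b := by exact_mod_cast hcb
    have h2 : (b:ℤ) ≤ d := by exact_mod_cast hbd
    linarith
  have hbdz : (b:ℤ) ≤ d := by exact_mod_cast hbd
  have hprod : ((d:ℤ) + b + c) * ((d:ℤ) + b - c) * ((d:ℤ) - b + c) * (-(d:ℤ) + b + c)
      ≤ (3*d) * (2*d) * (2*d) * d := by
    gcongr <;> linarith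
  have hksq : (k:ℤ) ≤ (k:ℤ) * (w:ℤ)^2 := by
    have hw1 : (1:ℤ) ≤ (w:ℤ) := by exact_mod_cast hw
    have hw2 : (1:ℤ) ≤ (w:ℤ)^2 := by nlinarith
    nlinarith [mul_le_mul_of_nonneg_left hw2 (Int.ofNat_nonneg k)]
  have : (k:ℤ) ≤ 12 * (d:ℤ)^4 := by
    calc (k:ℤ) ≤ (k:ℤ) * (w:ℤ)^2 := hksq
    _ = ((d:ℤ) + b + c) * ((d:ℤ) + b - c) * ((d:ℤ) - b + c) * (-(d:ℤ) + b + c) := heq.symm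
    _ ≤ (3*d) * (2*d) * (2*d) * d := hprod
    _ = 12 * (d:ℤ)^4 := by ring
  exact_mod_cast this

lemma key_count (d : ℕ) (hd : 100000 ≤ d) :
    (((K (d/2)) - 1) * ((K (d/4)) - 5)) ≤ 16 * (charSet d).ncard := by
  classical
  show ((((Finset.Ioc (d/2) (2*(d/2))).filter Nat.Prime).card - 1)
      * (((Finset.Ioc (d/4) (2*(d/4))).filter Nat.Prime).card - 5))
      ≤ 16 * (charSet d).ncard
  set Q₁ := (Finset.Ioc (d/4) (2*(d/4))).filter Nat.Prime with hQ₁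
  set Q₂ := (Finset.Ioc (d/2) (2*(d/2))).filter Nat.Prime with hQ₂
  set Q₂' := Q₂.filter (fun q => ¬ q ∣ 2*d) with hQ₂'
  set R : ℕ → Finset ℕ :=
    fun q => Q₁.filter (fun p => ¬ p ∣ 2*d ∧ ¬ p ∣ (2*d - q) ∧ ¬ q ∣ (2*d + p)) with hR
  set G := Q₂'.biUnion (fun q => (R q).image (fun p => (p, q))) with hG
  set κ : ℕ × ℕ → ℕ := fun x => sfp (Ngp d x.1 x.2) with hκ
  -- membership facts
  have hGmem : ∀ x ∈ G, Nat.Prime x.1 ∧ Nat.Prime x.2 ∧ d/4 < x.1 ∧ x.1 ≤ d/2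
      ∧ d/2 < x.2 ∧ x.2 ≤ d ∧ ¬ x.1 ∣ 2*d ∧ ¬ x.2 ∣ 2*d ∧ ¬ x.1 ∣ (2*d - x.2)
      ∧ ¬ x.2 ∣ (2*d + x.1) := by
    intro x hx
    rw [hG, Finset.mem_biUnion] at hx
    obtain ⟨q, hq, hx⟩ := hx
    rw [Finset.mem_image] at hx
    obtain ⟨p, hpmem, rfl⟩ := hx
    rw [hQ₂', Finset.mem_filter, hQ₂, Finset.mem_filter, Finset.mem_Ioc] at hq
    rw [hR, Finset.mem_filter, hQ₁, Finset.mem_filter, Finset.mem_Ioc] at hpmem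
    obtain ⟨⟨⟨hq1, hq2⟩, hqp⟩, hqd⟩ := hq
    obtain ⟨⟨⟨hp1, hp2⟩, hpp⟩, hb1, hb2, hb3⟩ := hpmem
    exact ⟨hpp, hqp, hp1, by omega, hq1, by omega, hb1, hqd, hb2, hb3⟩
  -- G.card lower bound
  have hGcard : Q₂'.card * (Q₁.card - 5) ≤ G.card := by
    rw [hG, Finset.card_biUnion]
    · calc Q₂'.card * (Q₁.card - 5) = ∑ _q ∈ Q₂', (Q₁.card - 5) := by
            rw [Finset.sum_const, smul_eq_mul]
      _ ≤ ∑ q ∈ Q₂', ((R q).image (fun p => (p, q))).card := by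
        apply Finset.sum_le_sum
        intro q hqmem
        rw [Finset.card_image_of_injective _ (fun a b hab => by simpa using hab)]
        -- show Q₁.card - 5 ≤ (R q).card
        have hqQ : d/2 < q ∧ q ≤ d ∧ ¬ q ∣ 2*d := by
          rw [hQ₂', Finset.mem_filter, hQ₂, Finset.mem_filter, Finset.mem_Ioc] at hqmem
          exact ⟨hqmem.1.1.1, by omega, hqmem.2⟩
        have hQsub : Q₁ ⊆ R q ∪ ((Q₁.filter (fun p => p ∣ 2*d)) ∪ (Q₁.filter (fun p => p ∣ (2*d - q)))
                ∪ (Q₁.filter (fun p => q ∣ (2*d + p)))) := by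
          intro p hpQ
          simp only [Finset.mem_union, Finset.mem_filter, hR]
          by_cases c1 : p ∣ 2*d
          · exact Or.inr (Or.inl (Or.inl ⟨hpQ, c1⟩))
          by_cases c2 : p ∣ (2*d - q)
          · exact Or.inr (Or.inl (Or.inr ⟨hpQ, c2⟩))
          by_cases c3 : q ∣ (2*d + p)
          · exact Or.inr (Or.inr ⟨hpQ, c3⟩)
          · exact Or.inl ⟨hpQ, c1, c2, c3⟩
        have c1 : (Q₁.filter (fun p => p ∣ 2*d)).card ≤ 2 := by
          have hsub2 : Q₁.filter (fun p => p ∣ 2*d)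
              ⊆ (2*d).primeFactors.filter (fun r => d/4 < r) := by
            intro p hpm
            rw [Finset.mem_filter] at hpm ⊢
            rw [hQ₁, Finset.mem_filter, Finset.mem_Ioc] at hpm
            exact ⟨Nat.mem_primeFactors.mpr ⟨hpm.1.2, hpm.2, by omega⟩, hpm.1.1.1⟩
          have := card_primeFactors_filter_lt (M := 2*d) (m := d/4) (j := 3)
            (by omega) (by
              have h4 : d < 4 * (d/4 + 1) := by omega
              have h8 : 8 ≤ (d/4 + 1)^2 :=
                le_trans (by norm_num) (Nat.pow_le_pow_left (show 3 ≤ d/4+1 by omega) 2)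
              calc 2*d < 8 * (d/4 + 1) := by omega
              _ ≤ (d/4+1)^2 * (d/4+1) := Nat.mul_le_mul_right _ h8
              _ = (d/4+1)^3 := by ring)
          have := Finset.card_le_card hsub2
          omega
        have c2 : (Q₁.filter (fun p => p ∣ (2*d - q))).card ≤ 2 := by
          have hsub2 : Q₁.filter (fun p => p ∣ (2*d - q))
              ⊆ (2*d - q).primeFactors.filter (fun r => d/4 < r) := by
            intro p hpm
            rw [Finset.mem_filter] at hpm ⊢
            rw [hQ₁, Finset.mem_filter, Finset.mem_Ioc] at hpm
            exact ⟨Nat.mem_primeFactors.mpr ⟨hpm.1.2, hpm.2, by omega⟩, hpm.1.1.1⟩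
          have := card_primeFactors_filter_lt (M := 2*d - q) (m := d/4) (j := 3)
            (by omega) (by
              have h8 : 8 ≤ (d/4 + 1)^2 :=
                le_trans (by norm_num) (Nat.pow_le_pow_left (show 3 ≤ d/4+1 by omega) 2)
              calc 2*d - q < 8 * (d/4 + 1) := by omega
              _ ≤ (d/4+1)^2 * (d/4+1) := Nat.mul_le_mul_right _ h8
              _ = (d/4+1)^3 := by ring)
          have := Finset.card_le_card hsub2
          omega
        have c3 : (Q₁.filter (fun p => q ∣ (2*d + p))).card ≤ 1 := by
          rw [Finset.card_le_one]
          intro p1 hp1m p2 hp2m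
          rw [Finset.mem_filter, hQ₁, Finset.mem_filter, Finset.mem_Ioc] at hp1m hp2m
          obtain ⟨⟨⟨ha1, ha2⟩, _⟩, hdvd1⟩ := hp1m
          obtain ⟨⟨⟨hb1, hb2⟩, _⟩, hdvd2⟩ := hp2m
          rcases le_total p1 p2 with hle | hle
          · have : q ∣ p2 - p1 := by
              have := Nat.dvd_sub hdvd2 hdvd1
              rwa [show 2*d + p2 - (2*d + p1) = p2 - p1 by omega] at this
            rcases Nat.eq_zero_or_pos (p2 - p1) with h0 | h0
            · omega
            · have := Nat.le_of_dvd h0 this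
              omega
          · have : q ∣ p1 - p2 := by
              have := Nat.dvd_sub hdvd1 hdvd2
              rwa [show 2*d + p1 - (2*d + p2) = p1 - p2 by omega] at this
            rcases Nat.eq_zero_or_pos (p1 - p2) with h0 | h0
            · omega
            · have := Nat.le_of_dvd h0 this
              omega
        have hchain : Q₁.card ≤ (R q).card + 5 := by
          calc Q₁.card ≤ (R q ∪ ((Q₁.filter (fun p => p ∣ 2*d)) ∪ (Q₁.filter (fun p => p ∣ (2*d - q)))
                ∪ (Q₁.filter (fun p => q ∣ (2*d + p))))).card := Finset.card_le_card hQsub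
          _ ≤ (R q).card + ((Q₁.filter (fun p => p ∣ 2*d)) ∪ (Q₁.filter (fun p => p ∣ (2*d - q)))
                ∪ (Q₁.filter (fun p => q ∣ (2*d + p)))).card := Finset.card_union_le _ _
          _ ≤ (R q).card + (((Q₁.filter (fun p => p ∣ 2*d)) ∪ (Q₁.filter (fun p => p ∣ (2*d - q)))).card
                + (Q₁.filter (fun p => q ∣ (2*d + p))).card) := by
                gcongr
                exact Finset.card_union_le _ _
          _ ≤ (R q).card + (((Q₁.filter (fun p => p ∣ 2*d)).card + (Q₁.filter (fun p => p ∣ (2*d - q))).card)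
                + (Q₁.filter (fun p => q ∣ (2*d + p))).card) := by
                gcongr
                exact Finset.card_union_le _ _
          _ ≤ (R q).card + 5 := by omega
        omega
      _ = _ := rfl
    · -- disjointness
      intro q1 h1 q2 h2 hne
      rw [Function.onFun, Finset.disjoint_left]
      intro x hx1 hx2
      rw [Finset.mem_image] at hx1 hx2
      obtain ⟨p1, _, rfl⟩ := hx1
      obtain ⟨p2, _, h⟩ := hx2
      exact hne (by simpa using (congrArg Prod.snd h).symm)
  -- Q₂' card
  have hQ₂'card : Q₂.card - 1 ≤ Q₂'.card := by
    have hQsub : Q₂ ⊆ Q₂' ∪ Q₂.filter (fun q => q ∣ 2*d) := by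
      intro x hx
      simp only [Finset.mem_union, Finset.mem_filter, hQ₂']
      by_cases c1 : x ∣ 2*d
      · exact Or.inr ⟨hx, c1⟩
      · exact Or.inl ⟨hx, c1⟩
    have hbad : (Q₂.filter (fun q => q ∣ 2*d)).card ≤ 1 := by
      have hsub2 : Q₂.filter (fun q => q ∣ 2*d)
          ⊆ (2*d).primeFactors.filter (fun r => d/2 < r) := by
        intro p hpm
        rw [Finset.mem_filter] at hpm
        rw [Finset.mem_filter]
        rw [hQ₂, Finset.mem_filter, Finset.mem_Ioc] at hpm
        exact ⟨Nat.mem_primeFactors.mpr ⟨hpm.1.2, hpm.2, by omega⟩, hpm.1.1.1⟩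
      have h2lt : 2*d < (d/2+1)^2 := by
        have h9 : 4 ≤ d/2+1 := by omega
        calc 2*d < 4 * (d/2 + 1) := by omega
        _ ≤ (d/2+1) * (d/2+1) := Nat.mul_le_mul_right _ h9
        _ = (d/2+1)^2 := by ring
      have := card_primeFactors_filter_lt (M := 2*d) (m := d/2) (j := 2) (by omega) h2lt
      have := Finset.card_le_card hsub2
      omega
    have := Finset.card_le_card hQsub
    have := Finset.card_union_le Q₂' (Q₂.filter (fun q => q ∣ 2*d))
    omega
  -- fibers of κ are small
  have hfiber : ∀ a ∈ G.image κ, (G.filter (fun x => κ x = a)).card ≤ 16 := by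
    intro a ha
    rw [Finset.mem_image] at ha
    obtain ⟨x₀, hx₀G, hx₀⟩ := ha
    obtain ⟨hpp, hqp, hp1, hp2, hq1, hq2, hb1, hb2, hb3, hb4⟩ := hGmem x₀ hx₀G
    have hNne : Ngp d x₀.1 x₀.2 ≠ 0 := Ngp_ne_zero hd hpp hqp hp1 hp2 hq1 hq2
    have hane : a ≠ 0 := by rw [← hx₀]; exact sfp_ne_zero hNne
    have hale : a ≤ 6 * d^4 := by
      have h1 : a ∣ Ngp d x₀.1 x₀.2 := by rw [← hx₀]; exact sfp_dvd _
      have h2 := Nat.le_of_dvd (Nat.pos_of_ne_zero hNne) h1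
      have h3 := Ngp_le hd hpp hqp hp1 hp2 hq1 hq2
      omega
    have hScard : (a.primeFactors.filter (fun r => d/4 < r)).card ≤ 4 := by
      have := card_primeFactors_filter_lt (M := a) (m := d/4) (j := 5) hane (by
        have h4 : d < 4 * (d/4 + 1) := by omega
        have hd4 : d^4 < (4 * (d/4+1))^4 := Nat.pow_lt_pow_left h4 (by norm_num)
        have h1536 : 1536 ≤ d/4 + 1 := by omega
        calc a ≤ 6 * d^4 := hale
        _ < 6 * (4 * (d/4+1))^4 := by omega
        _ = 1536 * (d/4+1)^4 := by ring
        _ ≤ (d/4+1) * (d/4+1)^4 := Nat.mul_le_mul_right _ h1536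
        _ = (d/4+1)^5 := by ring)
      omega
    have hsubS : G.filter (fun x => κ x = a)
        ⊆ (a.primeFactors.filter (fun r => d/4 < r)) ×ˢ (a.primeFactors.filter (fun r => d/4 < r)) := by
      intro x hx
      rw [Finset.mem_filter] at hx
      obtain ⟨hxG, hxa⟩ := hx
      obtain ⟨hpp', hqp', hp1', hp2', hq1', hq2', hc1, hc2, hc3, hc4⟩ := hGmem x hxG
      have hNne' : Ngp d x.1 x.2 ≠ 0 := Ngp_ne_zero hd hpp' hqp' hp1' hp2' hq1' hq2'
      have hpdvd : x.1 ∣ a := by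
        rw [← hxa]
        exact dvd_sfp hpp' hNne' (Ngp_odd_p hd hpp' hqp' hp1' hp2' hq1' hq2' hc1 hc3)
      have hqdvd : x.2 ∣ a := by
        rw [← hxa]
        exact dvd_sfp hqp' hNne' (Ngp_odd_q hd hpp' hqp' hp1' hp2' hq1' hq2' hc2 hc4)
      rw [Finset.mem_product, Finset.mem_filter, Finset.mem_filter]
      exact ⟨⟨Nat.mem_primeFactors.mpr ⟨hpp', hpdvd, hane⟩, hp1'⟩,
        ⟨Nat.mem_primeFactors.mpr ⟨hqp', hqdvd, hane⟩, by omega⟩⟩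
    calc (G.filter (fun x => κ x = a)).card
        ≤ ((a.primeFactors.filter (fun r => d/4 < r)) ×ˢ (a.primeFactors.filter (fun r => d/4 < r))).card :=
          Finset.card_le_card hsubS
    _ = (a.primeFactors.filter (fun r => d/4 < r)).card * (a.primeFactors.filter (fun r => d/4 < r)).card :=
          Finset.card_product _ _
    _ ≤ 4 * 4 := Nat.mul_le_mul hScard hScard
    _ = 16 := rfl
  have hcardle : G.card ≤ 16 * (G.image κ).card :=
    Finset.card_le_mul_card_image G 16 hfiber
  -- image inside charSet
  have himg : ∀ a ∈ G.image κ, a ∈ charSet d := by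
    intro a ha
    rw [Finset.mem_image] at ha
    obtain ⟨x, hxG, rfl⟩ := ha
    obtain ⟨hpp, hqp, hp1, hp2, hq1, hq2, hb1, hb2, hb3, hb4⟩ := hGmem x hxG
    exact Ngp_mem_charSet hd hpp hqp hp1 hp2 hq1 hq2 hb1 hb2 hb3 hb4
  have hncard : (G.image κ).card ≤ (charSet d).ncard := by
    have h1 : ((G.image κ : Finset ℕ) : Set ℕ) ⊆ charSet d := himg
    have := Set.ncard_le_ncard h1 (charSet_finite d)
    rwa [Set.ncard_coe_finset] at this
  calc (Q₂.card - 1) * (Q₁.card - 5) ≤ Q₂'.card * (Q₁.card - 5) :=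
        Nat.mul_le_mul_right _ hQ₂'card
  _ ≤ G.card := hGcard
  _ ≤ 16 * (G.image κ).card := hcardle
  _ ≤ 16 * (charSet d).ncard := Nat.mul_le_mul_left _ hncard

set_option maxHeartbeats 1000000

/-- The number of distinct characteristics occurring among integral triangles with
diameter `d` is `Ω(d²/(log d)²)`. -/
theorem charSet_card_bigOmega :
    ∃ c : ℝ, 0 < c ∧ ∃ d0 : ℕ, ∀ d : ℕ, d0 ≤ d →
      c * (d : ℝ) ^ 2 / (Real.log d) ^ 2 ≤ ((charSet d).ncard : ℝ) := by
  obtain ⟨n₀, hn₀⟩ := Filter.eventually_atTop.mp K_lower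
  refine ⟨1/51200, by norm_num, ?_⟩
  have hlog_ev : ∀ᶠ x : ℝ in atTop, Real.log x ≤ (1/400) * x := by
    have h := Real.isLittleO_log_id_atTop.def (show (0:ℝ) < 1/400 by norm_num)
    filter_upwards [h, eventually_ge_atTop (1:ℝ)] with x h1 hx
    rwa [Real.norm_eq_abs, abs_of_nonneg (Real.log_nonneg hx), id_eq, Real.norm_eq_abs,
      abs_of_nonneg (by linarith)] at h1
  have hlogN := (tendsto_natCast_atTop_atTop (R := ℝ)).eventually hlog_ev
  have hEv : ∀ᶠ d : ℕ in Filter.atTop,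
      (1/51200 : ℝ) * (d : ℝ)^2 / (Real.log d)^2 ≤ ((charSet d).ncard : ℝ) := by
    filter_upwards [hlogN, eventually_ge_atTop (100000 + 4*n₀)] with d hlogd hdge
    have hd1 : 100000 ≤ d := by omega
    have hn₁ : n₀ ≤ d/4 := by omega
    have hn₂ : n₀ ≤ d/2 := by omega
    set A := K (d/4) with hA
    set B := K (d/2) with hB
    have hkey := key_count d hd1
    -- real facts
    have hdR : (100000 : ℝ) ≤ (d:ℝ) := by exact_mod_cast hd1
    set L := Real.log d with hL
    have hLpos : 0 < L := Real.log_pos (by linarith)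
    have hlogd' : L ≤ (1/400) * d := hlogd
    -- A * L lower bound
    have hn₁R : (d:ℝ)/8 ≤ ((d/4 : ℕ) : ℝ) := by
      have h4 : d ≤ 4 * (d/4) + 3 := by omega
      have : (d:ℝ) ≤ 4 * ((d/4 : ℕ):ℝ) + 3 := by exact_mod_cast h4
      linarith
    have hn₂R : (d:ℝ)/4 ≤ ((d/2 : ℕ) : ℝ) := by
      have h4 : d ≤ 2 * (d/2) + 1 := by omega
      have : (d:ℝ) ≤ 2 * ((d/2 : ℕ):ℝ) + 1 := by exact_mod_cast h4
      linarith
    have hlogn₁pos : 0 < Real.log ((d/4 : ℕ) : ℝ) := by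
      apply Real.log_pos; linarith
    have hlogn₂pos : 0 < Real.log ((d/2 : ℕ) : ℝ) := by
      apply Real.log_pos; linarith
    have hlogn₁le : Real.log ((d/4 : ℕ) : ℝ) ≤ L := by
      apply Real.log_le_log (by linarith)
      have : (d/4 : ℕ) ≤ d := Nat.div_le_self _ _
      exact_mod_cast this
    have hlogn₂le : Real.log ((d/2 : ℕ) : ℝ) ≤ L := by
      apply Real.log_le_log (by linarith)
      have : (d/2 : ℕ) ≤ d := Nat.div_le_self _ _
      exact_mod_cast this
    have hAL : (d:ℝ)/40 ≤ (A:ℝ) * L := by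
      have h1 := hn₀ (d/4) hn₁
      rw [div_le_iff₀ hlogn₁pos] at h1
      have h2 : (A:ℝ) * Real.log ((d/4 : ℕ) : ℝ) ≤ (A:ℝ) * L :=
        mul_le_mul_of_nonneg_left hlogn₁le (by positivity)
      rw [← hA] at h1
      nlinarith
    have hBL : (d:ℝ)/20 ≤ (B:ℝ) * L := by
      have h1 := hn₀ (d/2) hn₂
      rw [div_le_iff₀ hlogn₂pos] at h1
      have h2 : (B:ℝ) * Real.log ((d/2 : ℕ) : ℝ) ≤ (B:ℝ) * L :=
        mul_le_mul_of_nonneg_left hlogn₂le (by positivity)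
      rw [← hB] at h1
      nlinarith
    -- A ≥ 10 and B ≥ 2
    have hA10 : (10:ℝ) ≤ (A:ℝ) := by
      have : (10:ℝ) * L ≤ (A:ℝ) * L := by nlinarith
      exact le_of_mul_le_mul_right this hLpos
    have hB2 : (2:ℝ) ≤ (B:ℝ) := by
      have : (2:ℝ) * L ≤ (B:ℝ) * L := by nlinarith
      exact le_of_mul_le_mul_right this hLpos
    have hA10' : 10 ≤ A := by exact_mod_cast hA10
    have hB2' : 2 ≤ B := by exact_mod_cast hB2
    -- cast the key count
    have hkeyR : ((B:ℝ) - 1) * ((A:ℝ) - 5) ≤ 16 * ((charSet d).ncard : ℝ) := by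
      have := hkey
      have hcast : (((B - 1) * (A - 5) : ℕ) : ℝ) = ((B:ℝ) - 1) * ((A:ℝ) - 5) := by
        push_cast [Nat.cast_sub (show 1 ≤ B by omega), Nat.cast_sub (show 5 ≤ A by omega)]
        ring
      calc ((B:ℝ) - 1) * ((A:ℝ) - 5) = (((B - 1) * (A - 5) : ℕ) : ℝ) := hcast.symm
      _ ≤ ((16 * (charSet d).ncard : ℕ) : ℝ) := by exact_mod_cast this
      _ = 16 * ((charSet d).ncard : ℝ) := by push_cast; ring
    set X := ((charSet d).ncard : ℝ) with hX
    have hAB : (A:ℝ) * (B:ℝ) / 4 ≤ 16 * X := by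
      nlinarith [mul_le_mul (show (B:ℝ)/2 ≤ (B:ℝ) - 1 by linarith)
        (show (A:ℝ)/2 ≤ (A:ℝ) - 5 by linarith) (by linarith : (0:ℝ) ≤ (A:ℝ)/2)
        (by linarith : (0:ℝ) ≤ (B:ℝ) - 1)]
    -- final
    rw [div_le_iff₀ (by positivity : (0:ℝ) < L^2)]
    have hprod : ((d:ℝ)/40) * ((d:ℝ)/20) ≤ ((A:ℝ) * L) * ((B:ℝ) * L) :=
      mul_le_mul hAL hBL (by positivity) (by positivity)
    nlinarith [sq_nonneg L, sq_nonneg ((d:ℝ))]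
  obtain ⟨d0, hd0⟩ := Filter.eventually_atTop.mp hEv
  exact ⟨d0, hd0⟩
end

section
/- Let d be a sufficiently large integer and let p1, p2 be odd primes with 9d/4 < p1 < 10d/4 and 5d/4 < p2 < 6d/4. Set a = d, b = (p1+p2)/2 − d, c = (p1−p2)/2. Then a > b > c are positive integers forming a non-degenerate triangle with a+b+c = p1, a+b−c = p2, and the characteristic of this triangle is divisible by p1·p2. -/
lemma aux_prime_dvd (p : ℕ) (hp : p.Prime) (k w : ℕ) (N : ℤ)
    (h : (k : ℤ) * (w : ℤ) ^ 2 = (p : ℤ) * N) (hN : ¬ (p : ℤ) ∣ N) : p ∣ k := by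
  have hp' : Prime (p : ℤ) := Nat.prime_iff_prime_int.mp hp
  by_contra hk
  have hki : ¬ (p : ℤ) ∣ (k : ℤ) := by
    rwa [Int.natCast_dvd_natCast]
  have hdvd : (p : ℤ) ∣ (k : ℤ) * (w : ℤ) ^ 2 := h ▸ Dvd.intro N rfl
  have hw : (p : ℤ) ∣ (w : ℤ) := by
    rcases hp'.dvd_mul.mp hdvd with h1 | h1
    · exact absurd h1 hki
    · exact hp'.dvd_of_dvd_pow h1
  obtain ⟨m, hm⟩ := hw
  apply hN
  have hp0 : (p : ℤ) ≠ 0 := by exact_mod_cast hp.ne_zero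
  have key : (p : ℤ) * N = (p : ℤ) * ((k : ℤ) * p * m ^ 2) := by
    rw [← h, hm]; ring
  exact ⟨(k : ℤ) * m ^ 2, by have := mul_left_cancel₀ hp0 key; rw [this]; ring⟩

lemma aux_not_dvd (p : ℕ) (x : ℤ) (hx : 0 < x) (hxp : x < p) : ¬ (p : ℤ) ∣ x := by
  intro h
  have := Int.le_of_dvd hx h
  omega

/-- For all sufficiently large `d` and odd primes `p1 ∈ (9d/4, 10d/4)`,
`p2 ∈ (5d/4, 6d/4)`, setting `a = d`, `b = (p1+p2)/2 − d`, `c = (p1−p2)/2` gives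
positive integers `a > b > c` forming a non-degenerate triangle with `a+b+c = p1`,
`a+b−c = p2`, whose characteristic (squarefree part of
`(a+b+c)(a+b-c)(a-b+c)(-a+b+c)`) is divisible by `p1·p2`. -/
theorem prime_pair_triangle_char_divisible :
    ∃ d0 : ℕ, ∀ d : ℕ, d0 ≤ d → ∀ p1 p2 : ℕ, p1.Prime → p2.Prime → Odd p1 → Odd p2 →
      9 * d < 4 * p1 → 4 * p1 < 10 * d → 5 * d < 4 * p2 → 4 * p2 < 6 * d →
      ∀ b c : ℤ, 2 * b = (p1 : ℤ) + p2 - 2 * d → 2 * c = (p1 : ℤ) - p2 →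
        (0 < c ∧ c < b ∧ b < (d : ℤ)) ∧ (d : ℤ) < b + c ∧
        (d : ℤ) + b + c = p1 ∧ (d : ℤ) + b - c = p2 ∧
        (∀ k w : ℕ, Squarefree k → 0 < w →
          ((d : ℤ) + b + c) * ((d : ℤ) + b - c) * ((d : ℤ) - b + c) * (-(d : ℤ) + b + c)
            = (k : ℤ) * (w : ℤ) ^ 2 → p1 * p2 ∣ k) := by
  refine ⟨1, fun d hd p1 p2 hp1 hp2 _ _ h1 h2 h3 h4 b c hb hc => ?_⟩
  have hd' : (1 : ℤ) ≤ (d : ℤ) := by exact_mod_cast hd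
  have h1' : 9 * (d : ℤ) < 4 * p1 := by exact_mod_cast h1
  have h2' : 4 * (p1 : ℤ) < 10 * d := by exact_mod_cast h2
  have h3' : 5 * (d : ℤ) < 4 * p2 := by exact_mod_cast h3
  have h4' : 4 * (p2 : ℤ) < 6 * d := by exact_mod_cast h4
  have hne : p1 ≠ p2 := by
    intro h; omega
  refine ⟨⟨by omega, by omega, by omega⟩, by omega, by omega, by omega, ?_⟩
  intro k w _ _ heq
  have e1 : (d : ℤ) + b + c = p1 := by omega
  have e2 : (d : ℤ) + b - c = p2 := by omega
  have e3 : (d : ℤ) - b + c = 2 * d - p2 := by omega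
  have e4 : -(d : ℤ) + b + c = p1 - 2 * d := by omega
  rw [e1, e2, e3, e4] at heq
  have hk1 : p1 ∣ k := by
    apply aux_prime_dvd p1 hp1 k w ((p2 : ℤ) * (2 * d - p2) * (p1 - 2 * d))
    · rw [← heq]; ring
    · intro hdvd
      have hp1' : Prime ((p1 : ℤ)) := Nat.prime_iff_prime_int.mp hp1
      rcases hp1'.dvd_mul.mp hdvd with h' | h'
      · rcases hp1'.dvd_mul.mp h' with h'' | h''
        · rw [Int.natCast_dvd_natCast] at h''
          exact hne ((Nat.prime_dvd_prime_iff_eq hp1 hp2).mp h'')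
        · exact aux_not_dvd p1 _ (by omega) (by omega) h''
      · exact aux_not_dvd p1 _ (by omega) (by omega) h'
  have hk2 : p2 ∣ k := by
    apply aux_prime_dvd p2 hp2 k w ((p1 : ℤ) * (2 * d - p2) * (p1 - 2 * d))
    · rw [← heq]; ring
    · intro hdvd
      have hp2' : Prime ((p2 : ℤ)) := Nat.prime_iff_prime_int.mp hp2
      rcases hp2'.dvd_mul.mp hdvd with h' | h'
      · rcases hp2'.dvd_mul.mp h' with h'' | h''
        · rw [Int.natCast_dvd_natCast] at h''
          exact hne (((Nat.prime_dvd_prime_iff_eq hp2 hp1).mp h'').symm)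
        · exact aux_not_dvd p2 _ (by omega) (by omega) h''
      · exact aux_not_dvd p2 _ (by omega) (by omega) h'
  exact (Nat.Coprime.mul_dvd_of_dvd_of_dvd ((Nat.coprime_primes hp1 hp2).mpr hne) hk1 hk2)
end

section
/- For a plane integral point set P of n points in which at least m of the points are collinear (and one point C lies off that line), the number of collinear points m satisfies m ≤ τ(D) up to a constant factor, where D is the decomposition number of the largest triangle of P; consequently the number of divisors of D is at least m/2. -/
/-- For a plane integral point set with `m` collinear points (on the segment between
collinear points `A` and `B`) and a point `C` off the line, the number of divisors of
the decomposition number `D = (a+b+c)(a+b-c)(a-b+c)(-a+b+c)/gcd(b²−c²+a², 2a)²`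
of the largest triangle `ABC` is at least `m/2`, i.e. `m ≤ 2·τ(D)`. -/
theorem collinear_points_le_two_tau_decomposition
    (S : Set (EuclideanSpace ℝ (Fin 2))) (hfin : S.Finite)
    (hint : ∀ p ∈ S, ∀ q ∈ S, ∃ n : ℕ, dist p q = n)
    (T : Set (EuclideanSpace ℝ (Fin 2))) (hTS : T ⊆ S) (hcol : Collinear ℝ T)
    (m : ℕ) (hm : T.ncard = m)
    (C A B : EuclideanSpace ℝ (Fin 2)) (hC : C ∈ S) (hA : A ∈ T) (hB : B ∈ T)
    (hCoff : ¬ Collinear ℝ (T ∪ {C}))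
    (hseg : ∀ X ∈ T, X ∈ segment ℝ A B)
    (a b c : ℕ) (hab : dist A B = a) (hca : dist C A = b) (hcb : dist C B = c)
    (hba : b ≤ a) (hcba : c ≤ b) :
    ∃ D : ℕ, (D : ℤ) * (Nat.gcd (b ^ 2 + a ^ 2 - c ^ 2) (2 * a) : ℤ) ^ 2 =
        ((a : ℤ) + b + c) * ((a : ℤ) + b - c) * ((a : ℤ) - b + c) * (-(a : ℤ) + b + c) ∧
      m ≤ 2 * D.divisors.card := by
  -- parametrization of points on the segment
  have hparam : ∀ X ∈ T, ∃ t : ℝ, 0 ≤ t ∧ X = A + t • (B - A) := by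
    intro X hX
    have := hseg X hX
    rw [segment_eq_image'] at this
    obtain ⟨t, ht, hX'⟩ := this
    exact ⟨t, ht.1, hX'.symm⟩
  -- A ≠ B
  have hAB : A ≠ B := by
    rintro rfl
    apply hCoff
    rw [collinear_iff_of_mem (Set.mem_union_left _ hA)]
    refine ⟨C - A, ?_⟩
    rintro p (hp | hp)
    · obtain ⟨t, _, hps⟩ := hparam p hp
      exact ⟨0, by simp [hps]⟩
    · exact ⟨1, by simp [Set.mem_singleton_iff.mp hp]⟩
  -- C is not on the line AB
  have hlinC : ∀ t : ℝ, C ≠ A + t • (B - A) := by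
    intro t hC'
    apply hCoff
    rw [collinear_iff_of_mem (Set.mem_union_left _ hA)]
    refine ⟨B - A, ?_⟩
    rintro p (hp | hp)
    · obtain ⟨s, _, hps⟩ := hparam p hp
      exact ⟨s, by rw [hps]; simp [add_comm]⟩
    · exact ⟨t, by rw [Set.mem_singleton_iff.mp hp, hC']; simp [add_comm]⟩
  have hCX : ∀ X ∈ T, C ≠ X := by
    intro X hX h
    obtain ⟨t, _, hXp⟩ := hparam X hX
    exact hlinC t (h.trans hXp)
  have ha0 : 0 < a := by
    have := dist_pos.mpr hAB
    rw [hab] at this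
    exact_mod_cast this
  have hc0 : 0 < c := by
    rcases Nat.eq_zero_or_pos c with h | h
    swap
    · exact h
    · exfalso
      apply hCX B hB
      have : dist C B = 0 := by rw [hcb, h]; simp
      exact dist_eq_zero.mp this
  -- strict triangle inequality
  have htri : a < b + c := by
    by_contra h
    push_neg at h
    have h1 : dist A C + dist C B ≤ dist A B := by
      rw [hab, dist_comm A C, hca, hcb]
      exact_mod_cast h
    have h2 : dist A C + dist C B = dist A B :=
      le_antisymm h1 (dist_triangle A C B)
    have hw : Wbtw ℝ A C B := dist_add_dist_eq_iff.mp h2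
    have : C ∈ segment ℝ A B := mem_segment_iff_wbtw.mpr hw
    rw [segment_eq_image'] at this
    obtain ⟨t, _, hC'⟩ := this
    exact hlinC t hC'.symm
  -- integer abbreviations
  set g : ℕ := Nat.gcd (b ^ 2 + a ^ 2 - c ^ 2) (2 * a) with hgdef
  set k : ℤ := (b : ℤ) ^ 2 + (a : ℤ) ^ 2 - (c : ℤ) ^ 2 with hkdef
  set R : ℤ := ((a : ℤ) + b + c) * ((a : ℤ) + b - c) * ((a : ℤ) - b + c) * (-(a : ℤ) + b + c)
    with hRdef
  have hc2 : c ^ 2 ≤ b ^ 2 + a ^ 2 :=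
    le_trans (Nat.pow_le_pow_left hcba 2) (Nat.le_add_right _ _)
  have hkcast : ((b ^ 2 + a ^ 2 - c ^ 2 : ℕ) : ℤ) = k := by
    rw [Nat.cast_sub hc2]; push_cast; ring
  have hGk : (g : ℤ) ∣ k := by
    rw [← hkcast]
    exact_mod_cast Nat.gcd_dvd_left _ _
  have hG2a : (g : ℤ) ∣ 2 * (a : ℤ) := by
    have := Nat.gcd_dvd_right (b ^ 2 + a ^ 2 - c ^ 2) (2 * a)
    exact_mod_cast this
  have hg0 : 0 < g := Nat.gcd_pos_of_pos_right _ (by omega)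
  have hG0 : (0 : ℤ) < (g : ℤ) := by exact_mod_cast hg0
  have hR4 : R = 4 * (a : ℤ) ^ 2 * (b : ℤ) ^ 2 - k ^ 2 := by rw [hRdef, hkdef]; ring
  have hRpos : 0 < R := by
    have h1 : (0 : ℤ) < (a : ℤ) + b + c := by positivity
    have h2 : (0 : ℤ) < (a : ℤ) + b - c := by
      have : (c : ℤ) ≤ b := by exact_mod_cast hcba
      have ha' : (0 : ℤ) < a := by exact_mod_cast ha0
      linarith
    have h3 : (0 : ℤ) < (a : ℤ) - b + c := by
      have : (b : ℤ) ≤ a := by exact_mod_cast hba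
      have hc' : (0 : ℤ) < c := by exact_mod_cast hc0
      linarith
    have h4 : (0 : ℤ) < -(a : ℤ) + b + c := by
      have : (a : ℤ) < b + c := by exact_mod_cast htri
      linarith
    exact mul_pos (mul_pos (mul_pos h1 h2) h3) h4
  have hG2R : ((g : ℤ)) ^ 2 ∣ R := by
    have h1 : (g : ℤ) ∣ 2 * (a : ℤ) * b - k := dvd_sub (hG2a.mul_right _) hGk
    have h2 : (g : ℤ) ∣ 2 * (a : ℤ) * b + k := dvd_add (hG2a.mul_right _) hGk
    have : R = (2 * (a : ℤ) * b - k) * (2 * (a : ℤ) * b + k) := by rw [hR4]; ring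
    rw [this, sq]
    exact mul_dvd_mul h1 h2
  -- the decomposition number
  have hDZ : (((R / (g : ℤ) ^ 2).toNat : ℤ)) = R / (g : ℤ) ^ 2 :=
    Int.toNat_of_nonneg (Int.ediv_nonneg hRpos.le (by positivity))
  have hDG : (((R / (g : ℤ) ^ 2).toNat : ℤ)) * (g : ℤ) ^ 2 = R := by
    rw [hDZ]; exact Int.ediv_mul_cancel hG2R
  refine ⟨(R / (g : ℤ) ^ 2).toNat, hDG, ?_⟩
  set D : ℕ := (R / (g : ℤ) ^ 2).toNat with hDdef
  have hD0 : D ≠ 0 := by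
    intro h
    rw [h] at hDG
    simp at hDG
    exact absurd hDG.symm hRpos.ne'
  -- the divisor-valued map
  set f : EuclideanSpace ℝ (Fin 2) → ℕ := fun X =>
    (⌊(2 * (a : ℝ) * dist C X + 2 * (a : ℝ) * dist A X - ((k : ℤ) : ℝ)) / (g : ℝ)⌋).toNat
    with hfdef
  have key : ∀ X ∈ T, ∃ u v q : ℤ, 0 < u ∧ u * v = (D : ℤ) ∧ (f X : ℤ) = u ∧
      u * (g : ℤ) - v * (g : ℤ) = 4 * a * q - 2 * k ∧
      X = A + ((q : ℝ) / (a : ℝ)) • (B - A) := by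
    intro X hX
    obtain ⟨q, hq⟩ := hint A (hTS hA) X (hTS hX)
    obtain ⟨r, hr⟩ := hint C hC X (hTS hX)
    obtain ⟨t, ht0, hXp⟩ := hparam X hX
    have haR : (0 : ℝ) < (a : ℝ) := by exact_mod_cast ha0
    -- q = t * a
    have hXA : X - A = t • (B - A) := by rw [hXp]; abel
    have hqa : (q : ℝ) = t * (a : ℝ) := by
      rw [← hq, dist_comm A X, dist_eq_norm, hXA, norm_smul,
        Real.norm_of_nonneg ht0, ← dist_eq_norm, dist_comm B A, hab]
    -- law of cosines ingredient
    have hI : 2 * (inner ℝ (C - A) (B - A) : ℝ) = (b : ℝ) ^ 2 + (a : ℝ) ^ 2 - (c : ℝ) ^ 2 := by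
      have hCB : C - B = (C - A) - (B - A) := by abel
      have h1 : (c : ℝ) ^ 2 = ‖(C - A) - (B - A)‖ ^ 2 := by
        rw [← hCB, ← dist_eq_norm, hcb]
      rw [norm_sub_sq_real, ← dist_eq_norm, ← dist_eq_norm, hca, dist_comm B A, hab] at h1
      linarith
    -- expand r²
    have hr2 : (r : ℝ) ^ 2 = (b : ℝ) ^ 2 - 2 * t * (inner ℝ (C - A) (B - A) : ℝ)
        + t ^ 2 * (a : ℝ) ^ 2 := by
      have hCXv : C - X = (C - A) - t • (B - A) := by rw [hXp]; abel
      have h1 : (r : ℝ) ^ 2 = ‖(C - A) - t • (B - A)‖ ^ 2 := by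
        rw [← hCXv, ← dist_eq_norm, hr]
      rw [norm_sub_sq_real, real_inner_smul_right, norm_smul, Real.norm_of_nonneg ht0,
        mul_pow, ← dist_eq_norm, ← dist_eq_norm, hca, dist_comm B A, hab] at h1
      linarith
    -- the key real identity
    have hreal : 4 * (a : ℝ) ^ 2 * (r : ℝ) ^ 2 =
        (2 * (a : ℝ) * q - ((b : ℝ) ^ 2 + (a : ℝ) ^ 2 - (c : ℝ) ^ 2)) ^ 2
          + (4 * (a : ℝ) ^ 2 * (b : ℝ) ^ 2 - ((b : ℝ) ^ 2 + (a : ℝ) ^ 2 - (c : ℝ) ^ 2) ^ 2) := by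
      rw [hqa, ← hI]
      linear_combination (4 : ℝ) * (a : ℝ) ^ 2 * hr2
    -- integer version
    have hZ : 4 * (a : ℤ) ^ 2 * (r : ℤ) ^ 2 = (2 * (a : ℤ) * q - k) ^ 2 + R := by
      have hcast : ((4 * (a : ℤ) ^ 2 * (r : ℤ) ^ 2 : ℤ) : ℝ)
          = (((2 * (a : ℤ) * q - k) ^ 2 + R : ℤ) : ℝ) := by
        rw [hkdef, hRdef]
        push_cast
        linear_combination hreal
      exact_mod_cast hcast
    -- divisibility to define u and v
    have hd1 : (g : ℤ) ∣ 2 * (a : ℤ) * r + (2 * (a : ℤ) * q - k) :=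
      dvd_add (hG2a.mul_right _) (dvd_sub (hG2a.mul_right _) hGk)
    have hd2 : (g : ℤ) ∣ 2 * (a : ℤ) * r - (2 * (a : ℤ) * q - k) :=
      dvd_sub (hG2a.mul_right _) (dvd_sub (hG2a.mul_right _) hGk)
    obtain ⟨u, hu⟩ := hd1
    obtain ⟨v, hv⟩ := hd2
    have huv : (u * v) * (g : ℤ) ^ 2 = R := by
      have : ((g : ℤ) * u) * ((g : ℤ) * v) = R := by
        rw [← hu, ← hv]; linear_combination hZ
      linear_combination this
    have huvD : u * v = (D : ℤ) := by
      have h2 : (u * v) * (g : ℤ) ^ 2 = (D : ℤ) * (g : ℤ) ^ 2 := by rw [huv, hDG]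
      exact mul_right_cancel₀ (by positivity) h2
    -- positivity of r
    have hrpos : (0 : ℝ) < r := by
      rw [← hr]
      exact dist_pos.mpr (hCX X hX)
    have hrZ : (0 : ℤ) < r := by exact_mod_cast hrpos
    -- positivity of u
    have huvpos : 0 < u * v := by
      have h0 : 0 < (u * v) * (g : ℤ) ^ 2 := huv ▸ hRpos
      have hg2 : (0 : ℤ) < (g : ℤ) ^ 2 := by positivity
      rcases mul_pos_iff.mp h0 with ⟨h, -⟩ | ⟨-, h⟩
      · exact h
      · linarith
    have haZ : (0 : ℤ) < (a : ℤ) := by exact_mod_cast ha0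
    have hsum : (g : ℤ) * (u + v) = 4 * a * r := by
      linear_combination (-1 : ℤ) * hu + (-1 : ℤ) * hv
    have hsumpos : 0 < u + v := by
      have h0 : 0 < (g : ℤ) * (u + v) := by
        rw [hsum]; positivity
      rcases mul_pos_iff.mp h0 with ⟨-, h⟩ | ⟨h, -⟩
      · exact h
      · linarith
    have hupos : 0 < u := by
      rcases mul_pos_iff.mp huvpos with ⟨h, -⟩ | ⟨h1, h2⟩
      · exact h
      · linarith
    -- the floor computes u
    have hgR : (0 : ℝ) < (g : ℝ) := by exact_mod_cast hg0
    have hfval : (f X : ℤ) = u := by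
      have hureal : (2 * (a : ℝ) * (r : ℝ) + 2 * (a : ℝ) * (q : ℝ) - ((k : ℤ) : ℝ))
          = (g : ℝ) * ((u : ℤ) : ℝ) := by
        have h0 := congrArg (fun z : ℤ => (z : ℝ)) hu
        push_cast at h0 ⊢
        linarith
      have hval : (2 * (a : ℝ) * dist C X + 2 * (a : ℝ) * dist A X - ((k : ℤ) : ℝ)) / (g : ℝ)
          = ((u : ℤ) : ℝ) := by
        rw [hr, hq, hureal, mul_div_cancel_left₀ _ hgR.ne']
      simp only [hfdef, hval, Int.floor_intCast]
      exact Int.toNat_of_nonneg hupos.le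
    have hdiff : u * (g : ℤ) - v * (g : ℤ) = 4 * a * q - 2 * k := by
      linear_combination hv - hu
    have hXq : X = A + ((q : ℝ) / (a : ℝ)) • (B - A) := by
      have : (q : ℝ) / (a : ℝ) = t := by
        rw [hqa]; field_simp
      rw [this]; exact hXp
    exact ⟨u, v, q, hupos, huvD, hfval, hdiff, hXq⟩
  -- conclusion by counting divisors
  have hmaps : ∀ X ∈ T, f X ∈ ((D.divisors : Finset ℕ) : Set ℕ) := by
    intro X hX
    obtain ⟨u, v, q, hupos, huvD, hfval, -, -⟩ := key X hX
    have hdvd : f X ∣ D := by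
      have : (f X : ℤ) ∣ (D : ℤ) := ⟨v, by rw [hfval, ← huvD]⟩
      exact_mod_cast this
    simp [Nat.mem_divisors, hdvd, hD0]
  have hinj : Set.InjOn f T := by
    intro X hX Y hY hfXY
    obtain ⟨u₁, v₁, q₁, hu₁, huv₁, hf₁, hd₁, hX₁⟩ := key X hX
    obtain ⟨u₂, v₂, q₂, hu₂, huv₂, hf₂, hd₂, hX₂⟩ := key Y hY
    have hu : u₁ = u₂ := by rw [← hf₁, ← hf₂, hfXY]
    have hv : v₁ = v₂ := by
      apply mul_left_cancel₀ hu₁.ne'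
      rw [huv₁, hu, huv₂]
    have haZ : (0 : ℤ) < (a : ℤ) := by exact_mod_cast ha0
    have hq : q₁ = q₂ := by
      have := hd₁
      rw [hu, hv, hd₂] at this
      have h4 : (4 : ℤ) * a * q₁ = 4 * a * q₂ := by linarith
      exact mul_left_cancel₀ (by positivity) h4
    rw [hX₁, hX₂, hq]
  have hTfin : T.Finite := hfin.subset hTS
  have hcount : T.ncard ≤ D.divisors.card := by
    have h1 := Set.ncard_le_ncard_of_injOn f hmaps hinj (D.divisors : Finset ℕ).finite_toSet
    rwa [Set.ncard_coe_finset] at h1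
  omega
end

section
/- Fix δ > 0 and ε > 0. There exists n₀ such that for all n ≥ n₀, every plane integral point set P of n points containing at least n^δ collinear points has diameter at least n^(δ·log log n / (4·log 2·(1+ε))). -/
open Real Finset Filter Asymptotics RealInnerProductSpace

lemma tau_core (N : ℕ) (hN : N ≠ 0) (x y : ℝ) (hxN : (N:ℝ) ≤ x) (hy : 2 ≤ y)
    (hx : 3 ≤ x) :
    (N.divisors.card : ℝ) ≤
      2 ^ (Real.log x / Real.log y) * (3 * Real.log x) ^ y := by
  have hL : 1 ≤ Real.log x := by
    rw [Real.le_log_iff_exp_le (by linarith)]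
    calc Real.exp 1 ≤ 2.7182818286 := (Real.exp_one_lt_d9).le
    _ ≤ 3 := by norm_num
    _ ≤ x := hx
  set L := Real.log x with hLdef
  have hlogy : 0 < Real.log y := Real.log_pos (by linarith)
  have hlogN : Real.log N ≤ L := Real.log_le_log (by positivity) hxN
  have hNprod : Real.log N = ∑ p ∈ N.primeFactors, (N.factorization p : ℝ) * Real.log p := by
    conv_lhs => rw [← Nat.factorization_prod_pow_eq_self hN]
    rw [Finsupp.prod, Nat.cast_prod, Real.log_prod]
    · rw [Nat.support_factorization]
      apply Finset.sum_congr rfl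
      intro p hp
      rw [Nat.cast_pow, Real.log_pow]
    · intro p hp
      have hpp := Nat.prime_of_mem_primeFactors (Nat.support_factorization (n := N) ▸ hp)
      have : (p:ℝ) ≠ 0 := Nat.cast_ne_zero.mpr hpp.ne_zero
      push_cast
      exact pow_ne_zero _ this
  set f : ℕ → ℝ := fun p => ((N.factorization p : ℝ) + 1) with hf
  set A : Finset ℕ := N.primeFactors.filter (fun p : ℕ => (p:ℝ) ≤ y) with hA
  set B : Finset ℕ := N.primeFactors.filter (fun p : ℕ => ¬ (p:ℝ) ≤ y) with hB
  have hsplit : (∏ p ∈ A, f p) * (∏ p ∈ B, f p) = ∏ p ∈ N.primeFactors, f p :=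
    Finset.prod_filter_mul_prod_filter_not N.primeFactors _ f
  have hcast : (N.divisors.card : ℝ) = ∏ p ∈ N.primeFactors, f p := by
    rw [Nat.card_divisors hN]
    push_cast
    rfl
  -- small primes bound
  have hsmall : (∏ p ∈ A, f p) ≤ (3 * L) ^ y := by
    have h3L : (1:ℝ) ≤ 3 * L := by linarith
    have hbound : ∀ p ∈ A, f p ≤ 3 * L := by
      intro p hp
      rw [hA, Finset.mem_filter] at hp
      have hpp := Nat.prime_of_mem_primeFactors hp.1
      have h2k : (2:ℕ) ^ (N.factorization p) ≤ N := by
        calc (2:ℕ) ^ (N.factorization p) ≤ p ^ (N.factorization p) :=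
          Nat.pow_le_pow_left hpp.two_le _
        _ ≤ N := Nat.ordProj_le p hN
      have hkl : (N.factorization p : ℝ) * Real.log 2 ≤ L := by
        calc (N.factorization p : ℝ) * Real.log 2 = Real.log ((2:ℝ) ^ (N.factorization p)) := by
              rw [Real.log_pow]
        _ ≤ Real.log N := Real.log_le_log (by positivity) (by exact_mod_cast h2k)
        _ ≤ L := hlogN
      have hlog2 : (0.6931471803:ℝ) < Real.log 2 := Real.log_two_gt_d9
      have hnn : (0:ℝ) ≤ (N.factorization p : ℝ) := Nat.cast_nonneg _
      rw [hf]
      simp only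
      nlinarith
    calc (∏ p ∈ A, f p) ≤ ∏ p ∈ A, (3 * L) :=
          Finset.prod_le_prod (fun p _ => by rw [hf]; positivity) hbound
    _ = (3 * L) ^ (A.card : ℕ) := by rw [Finset.prod_const]
    _ ≤ (3 * L) ^ y := by
          rw [← Real.rpow_natCast (3*L)]
          apply Real.rpow_le_rpow_of_exponent_le h3L
          have hsub : A ⊆ Finset.Icc 2 ⌊y⌋₊ := by
            intro p hp
            rw [hA, Finset.mem_filter] at hp
            rw [Finset.mem_Icc]
            exact ⟨(Nat.prime_of_mem_primeFactors hp.1).two_le, Nat.le_floor hp.2⟩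
          have h1 : A.card ≤ ⌊y⌋₊ := by
            have := Finset.card_le_card hsub
            rw [Nat.card_Icc] at this
            omega
          calc (A.card : ℝ) ≤ (⌊y⌋₊ : ℝ) := by exact_mod_cast h1
          _ ≤ y := Nat.floor_le (by linarith)
  -- large primes bound
  have hlarge : (∏ p ∈ B, f p) ≤ 2 ^ (L / Real.log y) := by
    have hsum : (∑ p ∈ B, (N.factorization p : ℝ)) * Real.log y ≤ L := by
      calc (∑ p ∈ B, (N.factorization p : ℝ)) * Real.log y
          = ∑ p ∈ B, (N.factorization p : ℝ) * Real.log y := by rw [Finset.sum_mul]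
      _ ≤ ∑ p ∈ B, (N.factorization p : ℝ) * Real.log p := by
            apply Finset.sum_le_sum
            intro p hp
            rw [hB, Finset.mem_filter] at hp
            have hyp : y < p := by push_neg at hp; exact hp.2
            exact mul_le_mul_of_nonneg_left (Real.log_le_log (by linarith) hyp.le)
              (Nat.cast_nonneg _)
      _ ≤ ∑ p ∈ N.primeFactors, (N.factorization p : ℝ) * Real.log p := by
            apply Finset.sum_le_sum_of_subset_of_nonneg (Finset.filter_subset _ _)
            intro p hp _
            have hpp := Nat.prime_of_mem_primeFactors hp
            have hlp : (0:ℝ) ≤ Real.log p := Real.log_nonneg (by exact_mod_cast hpp.one_lt.le)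
            positivity
      _ = Real.log N := hNprod.symm
      _ ≤ L := hlogN
    have hsum' : (∑ p ∈ B, (N.factorization p : ℝ)) ≤ L / Real.log y := by
      rw [le_div_iff₀ hlogy]; exact hsum
    calc (∏ p ∈ B, f p) ≤ ∏ p ∈ B, (2:ℝ) ^ (N.factorization p : ℕ) := by
          apply Finset.prod_le_prod (fun p _ => by rw [hf]; positivity)
          intro p hp
          have h1 : N.factorization p + 1 ≤ 2 ^ (N.factorization p) :=
            Nat.lt_two_pow_self
          show (N.factorization p : ℝ) + 1 ≤ _
          exact_mod_cast h1
    _ = (2:ℝ) ^ (∑ p ∈ B, N.factorization p : ℕ) := by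
          rw [← Finset.prod_pow_eq_pow_sum]
    _ = (2:ℝ) ^ ((∑ p ∈ B, N.factorization p : ℕ) : ℝ) := by
          rw [Real.rpow_natCast]
    _ ≤ (2:ℝ) ^ (L / Real.log y) := by
          apply Real.rpow_le_rpow_of_exponent_le one_le_two
          push_cast
          exact hsum'
  have hBnn : (0:ℝ) ≤ ∏ p ∈ B, f p :=
    Finset.prod_nonneg (fun p _ => by rw [hf]; positivity)
  calc (N.divisors.card : ℝ) = (∏ p ∈ A, f p) * (∏ p ∈ B, f p) := by rw [hcast, hsplit]
  _ ≤ (3 * L) ^ y * (2:ℝ) ^ (L / Real.log y) := mul_le_mul hsmall hlarge hBnn (by positivity)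
  _ = 2 ^ (L / Real.log y) * (3 * L) ^ y := by ring

-- eventually a*z ≥ b * log z + e
lemma ev_log (a b e : ℝ) (ha : 0 < a) :
    ∀ᶠ z : ℝ in atTop, b * Real.log z + e ≤ a * z := by
  have h1 : (fun z : ℝ => b * Real.log z) =o[atTop] id :=
    (Real.isLittleO_log_id_atTop).const_mul_left b
  have h2 := h1.bound (show (0:ℝ) < a/2 by linarith)
  filter_upwards [h2, eventually_ge_atTop (0:ℝ), eventually_ge_atTop (2*e/a + 1)] with z hz hz0 hze
  simp only [id_eq, Real.norm_eq_abs] at hz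
  have : b * Real.log z ≤ a/2 * z := by
    calc b * Real.log z ≤ |b * Real.log z| := le_abs_self _
    _ ≤ a/2 * |z| := hz
    _ = a/2 * z := by rw [abs_of_nonneg hz0]
  have key : a/2 * (2*e/a+1) = e + a/2 := by field_simp
  have := mul_le_mul_of_nonneg_left hze (le_of_lt (half_pos ha))
  linarith
-- eventually (log z)^2 + e ≤ a * z
lemma ev_logsq (a e : ℝ) (ha : 0 < a) :
    ∀ᶠ z : ℝ in atTop, (Real.log z)^2 + e ≤ a * z := by
  have h0 : Real.log =o[atTop] fun z : ℝ => z ^ (1/2 : ℝ) :=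
    isLittleO_log_rpow_atTop (by norm_num : (0:ℝ) < 1/2)
  have h1 : (fun z : ℝ => (Real.log z)^2) =o[atTop] fun z => (z ^ (1/2:ℝ))^2 :=
    h0.pow two_pos
  have h2 := h1.bound (show (0:ℝ) < a/2 by linarith)
  filter_upwards [h2, eventually_ge_atTop (0:ℝ), eventually_ge_atTop (2*e/a + 1)] with z hz hz0 hze
  simp only [Real.norm_eq_abs] at hz
  have hzz : (z ^ (1/2:ℝ))^2 = z := by
    rw [← Real.rpow_natCast (z ^ (1/2:ℝ)) 2, ← Real.rpow_mul hz0]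
    norm_num
  have : (Real.log z)^2 ≤ a/2 * z := by
    calc (Real.log z)^2 ≤ |(Real.log z)^2| := le_abs_self _
    _ ≤ a/2 * |(z ^ (1/2:ℝ))^2| := hz
    _ = a/2 * z := by rw [hzz, abs_of_nonneg hz0]
  have key : a/2 * (2*e/a+1) = e + a/2 := by field_simp
  have := mul_le_mul_of_nonneg_left hze (le_of_lt (half_pos ha))
  linarith

lemma one_le_log_of_three_le {x : ℝ} (hx : 3 ≤ x) : 1 ≤ Real.log x := by
  rw [Real.le_log_iff_exp_le (by linarith)]
  calc Real.exp 1 ≤ 2.7182818286 := (Real.exp_one_lt_d9).le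
  _ ≤ 3 := by norm_num
  _ ≤ x := hx

lemma divisor_bound_aux (ε' : ℝ) (hε' : 0 < ε')
    (core : ∀ (N : ℕ), N ≠ 0 → ∀ (x y : ℝ), (N:ℝ) ≤ x → 2 ≤ y → 3 ≤ x →
      (N.divisors.card : ℝ) ≤ 2 ^ (Real.log x / Real.log y) * (3 * Real.log x) ^ y) :
    ∃ x₀ : ℝ, ∀ (N : ℕ) (x : ℝ), x₀ ≤ x → (N : ℝ) ≤ x →
      (N.divisors.card : ℝ) ≤ 2 ^ ((1 + ε') * Real.log x / Real.log (Real.log x)) := by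
  have hlog2 : (0.6931471803:ℝ) < Real.log 2 := Real.log_two_gt_d9
  set c := ε' * Real.log 2 / 8 with hc
  have hcpos : 0 < c := by
    apply div_pos (mul_pos hε' (by linarith)) (by norm_num)
  set θ := (ε'/2)/(1+ε'/2) with hθdef
  have hθ : 0 < θ := div_pos (by linarith) (by linarith)
  have hLog : Filter.Tendsto Real.log Filter.atTop Filter.atTop := Real.tendsto_log_atTop
  have E1 : ∀ᶠ x : ℝ in Filter.atTop, 3 ≤ x := Filter.eventually_ge_atTop 3
  have E2 : ∀ᶠ x : ℝ in Filter.atTop,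
      (Real.log (Real.log x))^2 + 0 ≤ c/2 * Real.log x :=
    hLog.eventually (ev_logsq (c/2) 0 (by linarith))
  have E3 : ∀ᶠ x : ℝ in Filter.atTop, Real.log 3 ≤ Real.log (Real.log x) :=
    (hLog.comp hLog).eventually (Filter.eventually_ge_atTop (Real.log 3))
  have E4 : ∀ᶠ x : ℝ in Filter.atTop,
      2 * Real.log (Real.log (Real.log x)) + (- Real.log c) ≤ θ * Real.log (Real.log x) :=
    (hLog.comp hLog).eventually (ev_log θ 2 (-Real.log c) hθ)
  obtain ⟨x₀, hx₀⟩ := Filter.eventually_atTop.mp (E1.and (E2.and (E3.and E4)))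
  refine ⟨x₀, ?_⟩
  intro N x hx hNx
  obtain ⟨h1, h2, h3, h4⟩ := hx₀ x hx
  rcases eq_or_ne N 0 with rfl | hN
  · simp only [Nat.divisors_zero, Finset.card_empty, Nat.cast_zero]
    positivity
  set L := Real.log x with hLdef
  set LL := Real.log L with hLLdef
  have hL1 : 1 ≤ L := one_le_log_of_three_le h1
  have hlog3pos : 0 < Real.log 3 := Real.log_pos (by norm_num)
  have hLL0 : 0 < LL := lt_of_lt_of_le hlog3pos h3
  set y := c * L / LL^2 with hydef
  have hy2 : 2 ≤ y := by
    rw [hydef, le_div_iff₀ (by positivity)]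
    linarith
  have hcore := core N hN x y hNx hy2 h1
  have hlogy : Real.log y = Real.log c + LL - 2 * Real.log LL := by
    rw [hydef, Real.log_div (by positivity) (by positivity),
      Real.log_mul (ne_of_gt hcpos) (by positivity), Real.log_pow]
    push_cast
    ring
  have hθLL : θ * LL = LL - LL/(1+ε'/2) := by
    rw [hθdef]
    field_simp
    ring
  have hlogy_ge : LL/(1+ε'/2) ≤ Real.log y := by
    rw [hlogy]; linarith
  have hlogy_pos : 0 < Real.log y :=
    lt_of_lt_of_le (by positivity) hlogy_ge
  have hexp1 : L / Real.log y ≤ (1+ε'/2) * (L/LL) := by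
    have h5 : L / Real.log y ≤ L / (LL/(1+ε'/2)) :=
      div_le_div_of_nonneg_left (by linarith) (by positivity) hlogy_ge
    have h6 : L / (LL/(1+ε'/2)) = (1+ε'/2) * (L/LL) := by
      field_simp
    linarith
  have hexp2 : (3*L)^y ≤ (2:ℝ) ^ ((ε'/4) * (L/LL)) := by
    rw [Real.rpow_def_of_pos (by linarith : (0:ℝ) < 3*L),
      Real.rpow_def_of_pos two_pos]
    apply Real.exp_le_exp.mpr
    have hlog3L : Real.log (3*L) ≤ 2*LL := by
      rw [Real.log_mul (by norm_num) (by linarith)]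
      have : Real.log L ≤ LL := le_of_eq hLLdef.symm
      linarith [h3, Real.log_le_log (by norm_num : (0:ℝ) < 3) (le_refl (3:ℝ))]
    have hynn : 0 ≤ y := by linarith
    calc Real.log (3*L) * y ≤ (2*LL) * y :=
          mul_le_mul_of_nonneg_right hlog3L hynn
    _ = 2*c*(L/LL) := by
          rw [hydef]; field_simp
    _ = Real.log 2 * ((ε'/4) * (L/LL)) := by rw [hc]; ring
  have hLLnn : 0 ≤ L/LL := by positivity
  calc (N.divisors.card : ℝ) ≤ 2 ^ (L / Real.log y) * (3 * L) ^ y := hcore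
  _ ≤ 2 ^ ((1+ε'/2) * (L/LL)) * 2 ^ ((ε'/4) * (L/LL)) := by
      apply mul_le_mul _ hexp2 (by positivity) (by positivity)
      exact Real.rpow_le_rpow_of_exponent_le one_le_two hexp1
  _ = 2 ^ ((1+ε'/2) * (L/LL) + (ε'/4) * (L/LL)) := by
      rw [← Real.rpow_add two_pos]
  _ ≤ 2 ^ ((1 + ε') * L / LL) := by
      apply Real.rpow_le_rpow_of_exponent_le one_le_two
      rw [mul_div_assoc]
      nlinarith [hLLnn]

noncomputable abbrev EPlane := EuclideanSpace ℝ (Fin 2)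

set_option maxHeartbeats 2000000 in
lemma geom (S T : Finset EPlane) (hTS : T ⊆ S)
    (hint : ∀ p ∈ S, ∀ q ∈ S, ∃ m : ℕ, dist p q = m)
    (hS : ¬ Collinear ℝ (S : Set EPlane))
    (hT : Collinear ℝ (T : Set EPlane)) (hcard : 2 ≤ T.card)
    (d : ℝ) (hd : ∀ p ∈ S, ∀ q ∈ S, dist p q ≤ d) :
    ∃ N : ℕ, (N:ℝ) ≤ 4 * d^4 ∧ T.card ≤ N.divisors.card := by
  have hTne : T.Nonempty := Finset.card_pos.mp (by omega)
  obtain ⟨p₀, hp₀⟩ := hTne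
  have hp₀S : p₀ ∈ S := hTS hp₀
  rw [collinear_iff_of_mem (show p₀ ∈ (T : Set EPlane) from hp₀)] at hT
  obtain ⟨v, hv⟩ := hT
  have hvne : v ≠ 0 := by
    rintro rfl
    obtain ⟨p₁, hp₁, hne⟩ := Finset.exists_mem_ne (show 1 < T.card by omega) p₀
    obtain ⟨r, hr⟩ := hv p₁ hp₁
    simp at hr
    exact hne hr
  set w : EPlane := ‖v‖⁻¹ • v with hwdef
  have hw : ‖w‖ = 1 := by
    rw [hwdef, norm_smul, norm_inv, norm_norm,
      inv_mul_cancel₀ (norm_ne_zero_iff.mpr hvne)]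
  have hvw : ∀ p ∈ T, ∃ t : ℝ, p = t • w + p₀ := by
    intro p hp
    obtain ⟨r, hr⟩ := hv p hp
    refine ⟨r * ‖v‖, ?_⟩
    rw [hwdef, smul_smul, mul_assoc, mul_inv_cancel₀ (norm_ne_zero_iff.mpr hvne),
      mul_one]
    simpa using hr
  choose! tc htc using hvw
  have ht0 : tc p₀ = 0 := by
    have h := htc p₀ hp₀
    have : tc p₀ • w = 0 := by
      have := congrArg (· - p₀) h
      simpa using this.symm
    have hw0 : w ≠ 0 := by
      intro h0; rw [h0] at hw; simp at hw
    rcases smul_eq_zero.mp this with h' | h'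
    · exact h'
    · exact absurd h' hw0
  -- distances between points of T
  have hdistT : ∀ p ∈ T, ∀ p' ∈ T, dist p p' = |tc p - tc p'| := by
    intro p hp p' hp'
    rw [dist_eq_norm]
    nth_rewrite 1 [htc p hp, htc p' hp']
    rw [add_sub_add_right_eq_sub, ← sub_smul, norm_smul, hw, mul_one,
      Real.norm_eq_abs]
  -- off-line point q
  have hoff : ¬ ∀ q ∈ S, ∃ t : ℝ, q = t • w + p₀ := by
    intro h
    apply hS
    rw [collinear_iff_of_mem (show p₀ ∈ (S : Set EPlane) from hp₀S)]
    exact ⟨w, fun p hp => h p hp⟩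
  push_neg at hoff
  obtain ⟨q, hqS, hq⟩ := hoff
  set r : EPlane := q - p₀ with hrdef
  set c : ℝ := ⟪r, w⟫ with hcdef
  set hs : ℝ := ‖r‖^2 - c^2 with hsdef
  have hspos : 0 < hs := by
    have hne : r - c • w ≠ 0 := by
      intro h0
      apply hq c
      have : r = c • w := by
        have := sub_eq_zero.mp h0
        exact this
      rw [hrdef] at this
      rw [← this]
      abel
    have hnorm : ‖r - c • w‖^2 = hs := by
      rw [norm_sub_sq_real, real_inner_smul_right, ← hcdef, norm_smul,
        Real.norm_eq_abs, hw, mul_one, sq_abs, hsdef]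
      ring
    rw [← hnorm]
    exact pow_pos (norm_pos_iff.mpr hne) 2
  -- distance from q to points of T
  have hdq : ∀ p ∈ T, (dist q p)^2 = hs + (tc p - c)^2 := by
    intro p hp
    rw [dist_eq_norm]
    have : q - p = r - tc p • w := by
      nth_rewrite 1 [htc p hp]
      rw [hrdef]; abel
    rw [this, norm_sub_sq_real, real_inner_smul_right, ← hcdef, norm_smul,
      Real.norm_eq_abs, hw, mul_one, sq_abs, hsdef]
    ring
  -- integer distances from q
  have hAex : ∀ p ∈ T, ∃ m : ℕ, dist q p = m := fun p hp => hint q hqS p (hTS hp)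
  choose! A hA using hAex
  -- integer coordinates
  have hMex : ∀ p ∈ T, ∃ z : ℤ, (z:ℝ) = tc p := by
    intro p hp
    obtain ⟨m, hm⟩ := hint p (hTS hp) p₀ hp₀S
    rw [hdistT p hp p₀ hp₀, ht0, sub_zero] at hm
    rcases ((abs_eq (by positivity : (0:ℝ) ≤ (m:ℕ))).mp hm) with h | h
    · exact ⟨(m:ℤ), by exact_mod_cast h.symm⟩
    · refine ⟨-(m:ℤ), ?_⟩
      push_cast
      linarith
  choose! M hM using hMex
  have hM0 : M p₀ = 0 := by
    have h := hM p₀ hp₀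
    rw [ht0] at h
    exact_mod_cast h
  -- the subgroup of admissible integers
  set H : AddSubgroup ℤ :=
    { carrier := {m : ℤ | ∃ k : ℤ, (k:ℝ) = 2 * (m:ℝ) * c}
      zero_mem' := ⟨0, by push_cast; ring⟩
      add_mem' := by
        rintro m1 m2 ⟨k1, hk1⟩ ⟨k2, hk2⟩
        exact ⟨k1 + k2, by push_cast; push_cast at hk1 hk2; linarith⟩
      neg_mem' := by
        rintro m ⟨k, hk⟩
        exact ⟨-k, by push_cast; push_cast at hk; linarith⟩ } with hHdef
  have hMH : ∀ p ∈ T, M p ∈ H := by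
    intro p hp
    refine ⟨(M p)^2 - (A p:ℤ)^2 + (A p₀:ℤ)^2, ?_⟩
    have h1 : ((A p : ℕ):ℝ)^2 = hs + (tc p - c)^2 := by
      rw [← hA p hp]; exact hdq p hp
    have h2 : ((A p₀ : ℕ):ℝ)^2 = hs + c^2 := by
      rw [← hA p₀ hp₀, hdq p₀ hp₀, ht0]; ring
    have h3 : (M p : ℝ) = tc p := hM p hp
    push_cast
    rw [h3]
    linear_combination h2 - h1
  obtain ⟨g₀, hg₀⟩ := Int.subgroup_cyclic H
  have hdvd : ∀ m : ℤ, m ∈ H → g₀ ∣ m := by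
    intro m hm
    rw [hg₀, AddSubgroup.mem_closure_singleton] at hm
    obtain ⟨n, hn⟩ := hm
    exact ⟨n, by rw [← hn, zsmul_eq_mul]; push_cast; ring⟩
  obtain ⟨p₁, hp₁, hne₁⟩ := Finset.exists_mem_ne (show 1 < T.card by omega) p₀
  have hM₁ : M p₁ ≠ 0 := by
    intro h0
    apply hne₁
    have htc1 : tc p₁ = 0 := by rw [← hM p₁ hp₁, h0]; simp
    rw [htc p₁ hp₁, htc1]
    simp
  have hg₀ne : g₀ ≠ 0 := by
    intro h0
    apply hM₁
    have h := hdvd (M p₁) (hMH p₁ hp₁)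
    rwa [h0, zero_dvd_iff] at h
  set G : ℤ := |g₀| with hGdef
  have hGpos : 0 < G := abs_pos.mpr hg₀ne
  have hGdvd : ∀ p ∈ T, G ∣ M p := fun p hp => (abs_dvd _ _).mpr (hdvd _ (hMH p hp))
  have hg₀H : g₀ ∈ H := by rw [hg₀]; exact AddSubgroup.subset_closure rfl
  obtain ⟨k, hk⟩ := hg₀H
  have huex : ∃ u : ℤ, (u:ℝ) = 2 * (G:ℝ) * c := by
    rcases abs_choice g₀ with h | h
    · exact ⟨k, by rw [hGdef, h]; exact_mod_cast hk⟩
    · refine ⟨-k, ?_⟩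
      rw [hGdef, h]
      push_cast
      push_cast at hk
      linarith
  obtain ⟨u, hu⟩ := huex
  -- key identity
  have key : ∀ p ∈ T, (2*(G:ℝ)*((A p : ℕ):ℝ))^2
      = 4*(G:ℝ)^2*hs + (2*(G:ℝ)*((M p : ℤ):ℝ) - (u:ℝ))^2 := by
    intro p hp
    have h1 : ((A p : ℕ):ℝ)^2 = hs + (tc p - c)^2 := by
      rw [← hA p hp]; exact hdq p hp
    have h3 : (M p : ℝ) = tc p := hM p hp
    rw [h3, hu]
    linear_combination (4*(G:ℝ)^2) * h1
  set NZ : ℤ := (2*G*(A p₀ : ℤ))^2 - u^2 with hNZdef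
  have hNZr : (NZ:ℝ) = 4*(G:ℝ)^2*hs := by
    have hkey := key p₀ hp₀
    rw [hM0] at hkey
    push_cast [hNZdef]
    push_cast at hkey
    linear_combination hkey
  have hGr : (0:ℝ) < (G:ℝ) := by exact_mod_cast hGpos
  have hNZpos : 0 < NZ := by
    have h : (0:ℝ) < (NZ:ℝ) := by rw [hNZr]; positivity
    exact_mod_cast h
  set f₁ : EPlane → ℤ := fun p => 2*G*(A p : ℤ) - (2*G*(M p) - u) with hf₁
  set f₂ : EPlane → ℤ := fun p => 2*G*(A p : ℤ) + (2*G*(M p) - u) with hf₂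
  have hff : ∀ p ∈ T, f₁ p * f₂ p = NZ := by
    intro p hp
    have hkey := key p hp
    have hr : ((f₁ p * f₂ p : ℤ):ℝ) = (NZ:ℝ) := by
      rw [hNZr]
      push_cast [hf₁, hf₂]
      linear_combination hkey
    exact_mod_cast hr
  have hApos : ∀ p ∈ T, 0 < A p := by
    intro p hp
    have hqp : q ≠ p := by
      intro h; exact hq (tc p) (h ▸ htc p hp)
    have h : (0:ℝ) < dist q p := dist_pos.mpr hqp
    rw [hA p hp] at h
    exact_mod_cast h
  have hfpos : ∀ p ∈ T, 0 < f₂ p ∧ 0 < f₁ p := by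
    intro p hp
    have hprod : 0 < f₁ p * f₂ p := by rw [hff p hp]; exact hNZpos
    have hsum : 0 < f₁ p + f₂ p := by
      have hsum' : f₁ p + f₂ p = 4*G*(A p:ℤ) := by rw [hf₁, hf₂]; ring
      rw [hsum']
      have hA' : (0:ℤ) < (A p : ℤ) := by exact_mod_cast hApos p hp
      positivity
    constructor <;> nlinarith [hprod, hsum]
  set N : ℕ := NZ.natAbs with hNdef
  have hNne : N ≠ 0 := by
    rw [hNdef]
    simp only [ne_eq, Int.natAbs_eq_zero]
    omega
  have hmaps : ∀ p ∈ T, (f₂ p).natAbs ∈ N.divisors := by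
    intro p hp
    rw [Nat.mem_divisors]
    refine ⟨?_, hNne⟩
    rw [hNdef]
    exact Int.natAbs_dvd_natAbs.mpr ⟨f₁ p, by rw [← hff p hp]; ring⟩
  have hinj : ∀ p ∈ T, ∀ p' ∈ T, (f₂ p).natAbs = (f₂ p').natAbs → p = p' := by
    intro p hp p' hp' heq
    have h2 : f₂ p = f₂ p' := by
      have e1 := Int.natAbs_of_nonneg (hfpos p hp).1.le
      have e2 := Int.natAbs_of_nonneg (hfpos p' hp').1.le
      rw [← e1, ← e2, heq]
    have h1 : f₁ p = f₁ p' := by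
      have h := (hff p hp).trans (hff p' hp').symm
      rw [h2] at h
      exact mul_right_cancel₀ (ne_of_gt (hfpos p' hp').1) h
    have hMM : M p = M p' := by
      have h4 : 4*G*(M p) = 4*G*(M p') := by
        have d1 : f₂ p - f₁ p = 2*(2*G*M p - u) := by rw [hf₁, hf₂]; ring
        have d2 : f₂ p' - f₁ p' = 2*(2*G*M p' - u) := by rw [hf₁, hf₂]; ring
        have := h1
        have := h2
        linarith [d1, d2]
      have h4G : (4*G : ℤ) ≠ 0 := by positivity
      exact mul_left_cancel₀ h4G h4
    have htcc : tc p = tc p' := by rw [← hM p hp, ← hM p' hp', hMM]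
    rw [htc p hp, htc p' hp', htcc]
  have hcardle : T.card ≤ N.divisors.card := by
    apply Finset.card_le_card_of_injOn (fun p => (f₂ p).natAbs) hmaps
    intro a ha b hb hab
    exact hinj a ha b hb hab
  refine ⟨N, ?_, hcardle⟩
  have hd0 : 0 ≤ d := le_trans dist_nonneg (hd p₀ hp₀S p₀ hp₀S)
  have hGd : (G:ℝ) ≤ d := by
    have h1 : G ≤ |M p₁| := Int.le_of_dvd (abs_pos.mpr hM₁) ((dvd_abs _ _).mpr (hGdvd p₁ hp₁))
    have h2 : ((|M p₁| : ℤ) : ℝ) = dist p₁ p₀ := by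
      rw [hdistT p₁ hp₁ p₀ hp₀, ht0, sub_zero]
      push_cast
      rw [hM p₁ hp₁]
    calc (G:ℝ) ≤ ((|M p₁| : ℤ):ℝ) := by exact_mod_cast h1
    _ = dist p₁ p₀ := h2
    _ ≤ d := hd p₁ (hTS hp₁) p₀ hp₀S
  have hAd : ((A p₀:ℕ):ℝ) ≤ d := by
    rw [← hA p₀ hp₀]; exact hd q hqS p₀ hp₀S
  have hNr : (N:ℝ) = (NZ:ℝ) := by
    rw [hNdef, Nat.cast_natAbs]
    exact_mod_cast (abs_of_nonneg hNZpos.le : |NZ| = NZ)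
  have hA0nn : (0:ℝ) ≤ ((A p₀:ℕ):ℝ) := Nat.cast_nonneg _
  calc (N:ℝ) = (NZ:ℝ) := hNr
  _ ≤ (2*(G:ℝ)*((A p₀:ℕ):ℝ))^2 := by
      push_cast [hNZdef]
      nlinarith [sq_nonneg ((u:ℝ))]
  _ ≤ (2*d*d)^2 := by
      apply pow_le_pow_left₀ (by positivity)
      nlinarith [hGd, hAd, hGr, hA0nn]
  _ = 4*d^4 := by ring

lemma divisor_bound (ε' : ℝ) (hε' : 0 < ε') :
    ∃ x₀ : ℝ, ∀ (N : ℕ) (x : ℝ), x₀ ≤ x → (N : ℝ) ≤ x →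
      (N.divisors.card : ℝ) ≤ 2 ^ ((1 + ε') * Real.log x / Real.log (Real.log x)) :=
  divisor_bound_aux ε' hε' (fun N hN x y hx hy h3 => tau_core N hN x y hx hy h3)

set_option maxHeartbeats 2000000 in
/-- For `δ > 0` and `ε > 0` there is `n₀` such that for all `n ≥ n₀`, every plane
integral point set of `n` points containing at least `n^δ` collinear points has
diameter at least `n^(δ·log log n / (4·log 2·(1+ε)))`. -/
theorem lower_bound_diameter_many_collinear (δ ε : ℝ) (hδ : 0 < δ) (hε : 0 < ε) :
    ∃ n₀ : ℕ, ∀ n : ℕ, n₀ ≤ n → ∀ S : Finset (EuclideanSpace ℝ (Fin 2)),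
      S.card = n →
      (∀ p ∈ S, ∀ q ∈ S, ∃ m : ℕ, dist p q = m) →
      ¬ Collinear ℝ (S : Set (EuclideanSpace ℝ (Fin 2))) →
      (∃ T : Finset (EuclideanSpace ℝ (Fin 2)), T ⊆ S ∧
        Collinear ℝ (T : Set (EuclideanSpace ℝ (Fin 2))) ∧ (n : ℝ) ^ δ ≤ (T.card : ℝ)) →
      ∃ p ∈ S, ∃ q ∈ S,
        (n : ℝ) ^ (δ * Real.log (Real.log n) / (4 * Real.log 2 * (1 + ε))) ≤ dist p q := by
  have hlog2 : (0.6931471803:ℝ) < Real.log 2 := Real.log_two_gt_d9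
  set s := Real.sqrt (1+ε) with hsdef
  have hs0 : 0 ≤ s := Real.sqrt_nonneg _
  have hs2 : s^2 = 1+ε := Real.sq_sqrt (by linarith)
  have hs1 : 1 < s := by nlinarith
  set s2 := Real.sqrt s with hs2def
  have hs20 : 0 ≤ s2 := Real.sqrt_nonneg _
  have hs22 : s2^2 = s := Real.sq_sqrt hs0
  have hs21 : 1 < s2 := by nlinarith
  set ε' := s2 - 1 with hε'def
  have hε' : 0 < ε' := by linarith
  have h1ε' : 1 + ε' = s2 := by linarith
  obtain ⟨x₀, hx₀⟩ := divisor_bound ε' hε'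
  set K := 4*Real.log 2*(1+ε) with hKdef
  have hK : 0 < K := by nlinarith
  -- eventual conditions
  have htn : Filter.Tendsto (fun n : ℕ => (n:ℝ)) Filter.atTop Filter.atTop :=
    tendsto_natCast_atTop_atTop
  have hLn : Filter.Tendsto (fun n : ℕ => Real.log (n:ℝ)) Filter.atTop Filter.atTop :=
    Real.tendsto_log_atTop.comp htn
  have hLLn : Filter.Tendsto (fun n : ℕ => Real.log (Real.log (n:ℝ)))
      Filter.atTop Filter.atTop := Real.tendsto_log_atTop.comp hLn
  have C1 : ∀ᶠ n : ℕ in Filter.atTop, (3:ℝ) ≤ (n:ℝ) :=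
    htn.eventually (Filter.eventually_ge_atTop 3)
  have C2 : ∀ᶠ n : ℕ in Filter.atTop, 1 ≤ Real.log (Real.log (n:ℝ)) :=
    hLLn.eventually (Filter.eventually_ge_atTop 1)
  have C3 : ∀ᶠ n : ℕ in Filter.atTop, 2 ≤ (n:ℝ)^δ :=
    ((tendsto_rpow_atTop hδ).comp htn).eventually (Filter.eventually_ge_atTop 2)
  have C4 : ∀ᶠ n : ℕ in Filter.atTop, x₀ ≤ (n:ℝ)^(4*δ/K) :=
    ((tendsto_rpow_atTop (by positivity)).comp htn).eventually
      (Filter.eventually_ge_atTop x₀)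
  have C5 : ∀ᶠ n : ℕ in Filter.atTop,
      0 * Real.log (Real.log (Real.log (n:ℝ))) + (- Real.log (4*δ/K)) ≤
        (ε'/(1+ε')) * Real.log (Real.log (n:ℝ)) :=
    hLLn.eventually (ev_log (ε'/(1+ε')) 0 (- Real.log (4*δ/K))
      (div_pos hε' (by linarith)))
  have C6 : ∀ᶠ n : ℕ in Filter.atTop,
      s*Real.log 2*Real.log 4/((1-1/s)*δ) < Real.log (n:ℝ) :=
    hLn.eventually (Filter.eventually_gt_atTop _)
  obtain ⟨n₀, hn₀⟩ := Filter.eventually_atTop.mp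
    (C1.and (C2.and (C3.and (C4.and (C5.and C6)))))
  refine ⟨n₀, ?_⟩
  intro n hn S hScard hint hScol hTex
  obtain ⟨h1, h2, h3, h4, h5, h6⟩ := hn₀ n hn
  obtain ⟨T, hTS, hTcol, hTcard⟩ := hTex
  by_contra hcon
  push_neg at hcon
  set Ln := Real.log (n:ℝ) with hLndef
  set LLn := Real.log Ln with hLLndef
  set B := (n:ℝ) ^ (δ * LLn / K) with hBdef
  have hn3 : (3:ℝ) ≤ (n:ℝ) := h1
  have hn0 : (0:ℝ) < (n:ℝ) := by linarith
  have hLn1 : 1 ≤ Ln := one_le_log_of_three_le hn3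
  have hLLn1 : 1 ≤ LLn := h2
  have hB0 : 0 < B := Real.rpow_pos_of_pos hn0 _
  have hcard2 : 2 ≤ T.card := by
    have h3' : (2:ℝ) ≤ (n:ℝ)^δ := h3
    exact_mod_cast le_trans h3' hTcard
  obtain ⟨N, hNle, hNcard⟩ := geom S T hTS hint hScol hTcol hcard2 B
    (fun p hp q hq => (hcon p hp q hq).le)
  set x := 4*B^4 with hxdef
  have hBquad : (n:ℝ)^((4:ℝ)*δ/K) ≤ B^4 := by
    have hB4 : B^4 = (n:ℝ)^((δ*LLn/K)*4) := by
      rw [hBdef, ← Real.rpow_natCast ((n:ℝ)^(δ*LLn/K)) 4, ← Real.rpow_mul hn0.le]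
      norm_num
    rw [hB4]
    apply Real.rpow_le_rpow_of_exponent_le (by linarith)
    rw [show (4:ℝ)*δ/K = (4*δ)/K by ring, show δ*LLn/K*4 = (δ*LLn*4)/K by ring,
      div_le_div_iff_of_pos_right hK]
    nlinarith
  have hxge : (n:ℝ)^((4:ℝ)*δ/K) ≤ x := by
    have hB4nn : (0:ℝ) ≤ B^4 := by positivity
    calc (n:ℝ)^((4:ℝ)*δ/K) ≤ B^4 := hBquad
    _ ≤ 4*B^4 := by linarith
  have hx₀x : x₀ ≤ x := le_trans h4 hxge
  have htau := hx₀ N x hx₀x (le_trans hNle (le_of_eq hxdef.symm))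
  have hchain : (n:ℝ)^δ ≤ 2 ^ ((1+ε')*Real.log x/Real.log (Real.log x)) := by
    calc (n:ℝ)^δ ≤ (T.card:ℝ) := hTcard
    _ ≤ (N.divisors.card:ℝ) := by exact_mod_cast hNcard
    _ ≤ _ := htau
  set Lx := Real.log x with hLxdef
  set LLx := Real.log Lx with hLLxdef
  have hmain : δ * Ln ≤ ((1+ε')*Lx/LLx) * Real.log 2 := by
    have h := Real.log_le_log (Real.rpow_pos_of_pos hn0 δ) hchain
    rwa [Real.log_rpow hn0, Real.log_rpow two_pos] at h
  have hLx : Lx = Real.log 4 + (δ*LLn/K)*Ln*4 := by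
    rw [hLxdef, hxdef, Real.log_mul (by norm_num) (by positivity), Real.log_pow,
      hBdef, Real.log_rpow hn0]
    push_cast
    ring
  have hδK : 0 < δ/K := div_pos hδ hK
  have hLxge : (4*δ/K)*Ln ≤ Lx := by
    rw [hLx]
    have hlog4 : 0 ≤ Real.log 4 := Real.log_nonneg (by norm_num)
    have ha : 0 ≤ 4*Ln*(δ/K) :=
      mul_nonneg (mul_nonneg (by norm_num) (by linarith)) hδK.le
    have hb : 4*Ln*(δ/K) ≤ 4*Ln*(δ/K)*LLn := le_mul_of_one_le_right ha hLLn1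
    have e1 : (4*δ/K)*Ln = 4*Ln*(δ/K) := by ring
    have e2 : (δ*LLn/K)*Ln*4 = 4*Ln*(δ/K)*LLn := by ring
    linarith
  have hLx0 : 0 ≤ Lx := le_trans (by positivity) hLxge
  have hLLxge : LLn/(1+ε') ≤ LLx := by
    have hpos : 0 < (4*δ/K)*Ln := by positivity
    have h' : Real.log ((4*δ/K)*Ln) ≤ LLx := Real.log_le_log hpos hLxge
    rw [Real.log_mul (by positivity) (by linarith)] at h'
    have h5' : - Real.log (4*δ/K) ≤ (ε'/(1+ε'))*LLn := by
      have := h5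
      linarith [this]
    have hid : (ε'/(1+ε'))*LLn = LLn - LLn/(1+ε') := by
      field_simp
      ring
    rw [← hLLndef] at h'
    linarith
  have hLLx0 : 0 < LLx :=
    lt_of_lt_of_le (div_pos (by linarith) (by linarith)) hLLxge
  have hF5 : Lx/LLx ≤ (1+ε')*(Lx/LLn) := by
    have h' : Lx/LLx ≤ Lx/(LLn/(1+ε')) :=
      div_le_div_of_nonneg_left hLx0 (div_pos (by linarith) (by linarith)) hLLxge
    have h'' : Lx/(LLn/(1+ε')) = (1+ε')*(Lx/LLn) := by
      field_simp
    linarith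
  have hmain2 : δ * Ln ≤ s * Real.log 2 * (Lx/LLn) := by
    calc δ * Ln ≤ ((1+ε')*Lx/LLx) * Real.log 2 := hmain
    _ = (1+ε')*(Lx/LLx)*Real.log 2 := by ring
    _ ≤ (1+ε')*((1+ε')*(Lx/LLn))*Real.log 2 := by
        apply mul_le_mul_of_nonneg_right _ (by linarith : (0:ℝ) ≤ Real.log 2)
        exact mul_le_mul_of_nonneg_left hF5 (by linarith)
    _ = s*Real.log 2*(Lx/LLn) := by rw [← hs22, h1ε']; ring
  have hLLnne : LLn ≠ 0 := by linarith
  have hF8 : Lx/LLn ≤ Real.log 4 + 4*δ*Ln/K := by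
    rw [hLx, add_div]
    have hlog4 : 0 ≤ Real.log 4 := Real.log_nonneg (by norm_num)
    have t1 : Real.log 4/LLn ≤ Real.log 4 := div_le_self hlog4 hLLn1
    have t2 : (δ*LLn/K)*Ln*4/LLn = 4*δ*Ln/K := by
      field_simp
    rw [t2]
    linarith
  have hKs : K = 4*Real.log 2*s^2 := by rw [hKdef, hs2]
  have hfin : s*Real.log 2*(Real.log 4 + 4*δ*Ln/K)
      = s*Real.log 2*Real.log 4 + δ*Ln/s := by
    rw [hKs]
    have hsne : s ≠ 0 := by linarith
    have hl2ne : Real.log 2 ≠ 0 := by linarith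
    field_simp
  have hlast : δ*Ln ≤ s*Real.log 2*Real.log 4 + δ*Ln/s := by
    calc δ*Ln ≤ s*Real.log 2*(Lx/LLn) := hmain2
    _ ≤ s*Real.log 2*(Real.log 4 + 4*δ*Ln/K) := by
        apply mul_le_mul_of_nonneg_left hF8 (mul_nonneg hs0 (Real.log_nonneg one_le_two))
    _ = _ := hfin
  have hcoef : 0 < (1 - 1/s)*δ := by
    have hinv : 1/s < 1 := by
      rw [div_lt_one (by linarith only [hs1])]
      linarith only [hs1]
    exact mul_pos (by linarith only [hinv]) hδ
  have h6' : s*Real.log 2*Real.log 4 < (1-1/s)*δ*Ln := by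
    have h6'' : s*Real.log 2*Real.log 4/((1-1/s)*δ) < Ln := h6
    have h7 := (div_lt_iff₀ hcoef).mp h6''
    rw [show (1-1/s)*δ*Ln = Ln*((1-1/s)*δ) from by ring]
    exact h7
  have hdecomp : (1-1/s)*δ*Ln = δ*Ln - δ*Ln/s := by ring
  linarith only [hlast, h6', hdecomp]
end

section
/- Every plane integral point set of n points with at most n/2 points on any line contains at least n/8 pairwise non-congruent non-degenerate integral triangles, all with the same diameter-pair side and equal characteristic; more precisely, for any two points A, B of the set, among the triangles ABC over points C of the set not on line AB, at most 4 can be congruent to each other, so there are at least n/8 non-congruent triangles sharing the side AB. -/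
open EuclideanGeometry

private lemma multiset_pair_eq_pair {α : Type*} {a b c d : α}
    (h : ({a, b} : Multiset α) = {c, d}) : (a = c ∧ b = d) ∨ (a = d ∧ b = c) := by
  simp only [Multiset.insert_eq_cons] at h
  rcases Multiset.cons_eq_cons.1 h with ⟨h1, h2⟩ | ⟨hne, cs, h1, h2⟩
  · exact Or.inl ⟨h1, Multiset.singleton_inj.1 h2⟩
  · obtain ⟨hb, hcs⟩ := (Multiset.singleton_eq_cons_iff _).1 h1
    subst hcs
    obtain ⟨hd, -⟩ := (Multiset.singleton_eq_cons_iff _).1 h2.symm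
    exact Or.inr ⟨hd, hb⟩

private lemma two_circles {A B : EuclideanSpace ℝ (Fin 2)} (hAB : A ≠ B) (r s : ℝ) :
    ∃ x y : EuclideanSpace ℝ (Fin 2),
      {P : EuclideanSpace ℝ (Fin 2) | dist A P = r ∧ dist B P = s} ⊆ {x, y} := by
  set T := {P : EuclideanSpace ℝ (Fin 2) | dist A P = r ∧ dist B P = s} with hT
  by_cases h : T.Nontrivial
  · obtain ⟨p₁, hp₁, p₂, hp₂, hne⟩ := h
    refine ⟨p₁, p₂, fun p hp => ?_⟩
    exact eq_of_dist_eq_of_dist_eq_of_finrank_eq_two (finrank_euclideanSpace_fin) hAB hne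
      ((dist_comm p₁ A).trans hp₁.1) ((dist_comm p₂ A).trans hp₂.1)
      ((dist_comm p A).trans hp.1) ((dist_comm p₁ B).trans hp₁.2)
      ((dist_comm p₂ B).trans hp₂.2) ((dist_comm p B).trans hp.2)
  · rcases (Set.not_nontrivial_iff.1 h).eq_empty_or_singleton with he | ⟨x, hx⟩
    · exact ⟨A, A, by rw [he]; exact Set.empty_subset _⟩
    · exact ⟨x, x, by rw [hx]; simp⟩

/-- Every plane integral point set of `n` points with at most `n/2` points on any line
contains, for each pair of distinct points `A, B`, at least `n/8` pairwise non-congruent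
non-degenerate integral triangles sharing the side `AB`: at most `4` points `C` yield
triangles `ABC` congruent to a given one, and there is a subset `V` of at least `n/8`
points giving pairwise non-congruent triangles over `AB`. -/
theorem many_noncongruent_triangles (n : ℕ) (S : Finset (EuclideanSpace ℝ (Fin 2)))
    (hcard : S.card = n)
    (hint : ∀ p ∈ S, ∀ q ∈ S, ∃ m : ℕ, dist p q = m)
    (hncol : ¬ Collinear ℝ (S : Set (EuclideanSpace ℝ (Fin 2))))
    (hline : ∀ T : Finset (EuclideanSpace ℝ (Fin 2)), T ⊆ S →
      Collinear ℝ (T : Set (EuclideanSpace ℝ (Fin 2))) → 2 * T.card ≤ n) :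
    ∀ A ∈ S, ∀ B ∈ S, A ≠ B →
      (∀ C ∈ S, ¬ Collinear ℝ ({A, B, C} : Set (EuclideanSpace ℝ (Fin 2))) →
        ({C' : EuclideanSpace ℝ (Fin 2) | C' ∈ S ∧
          ¬ Collinear ℝ ({A, B, C'} : Set (EuclideanSpace ℝ (Fin 2))) ∧
          ({dist A C', dist B C'} : Multiset ℝ) = {dist A C, dist B C}}).ncard ≤ 4) ∧
      (∃ V : Finset (EuclideanSpace ℝ (Fin 2)), V ⊆ S ∧ n ≤ 8 * V.card ∧
        (∀ C ∈ V, ¬ Collinear ℝ ({A, B, C} : Set (EuclideanSpace ℝ (Fin 2)))) ∧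
        (∀ C ∈ V, ∀ C' ∈ V, C ≠ C' →
          ({dist A C, dist B C} : Multiset ℝ) ≠ {dist A C', dist B C'})) := by
  classical
  intro A hA B hB hAB
  -- Part 1, stated for every C (no hypotheses needed)
  have hb : ∀ C : EuclideanSpace ℝ (Fin 2),
      ({C' : EuclideanSpace ℝ (Fin 2) | C' ∈ S ∧
        ¬ Collinear ℝ ({A, B, C'} : Set (EuclideanSpace ℝ (Fin 2))) ∧
        ({dist A C', dist B C'} : Multiset ℝ) = {dist A C, dist B C}}).ncard ≤ 4 := by
    intro C
    obtain ⟨x, y, hxy⟩ := two_circles hAB (dist A C) (dist B C)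
    obtain ⟨u, v, huv⟩ := two_circles hAB (dist B C) (dist A C)
    have hsub : {C' : EuclideanSpace ℝ (Fin 2) | C' ∈ S ∧
        ¬ Collinear ℝ ({A, B, C'} : Set (EuclideanSpace ℝ (Fin 2))) ∧
        ({dist A C', dist B C'} : Multiset ℝ) = {dist A C, dist B C}} ⊆
        {x, y, u, v} := by
      rintro C' ⟨-, -, hm⟩
      rcases multiset_pair_eq_pair hm with ⟨h1, h2⟩ | ⟨h1, h2⟩
      · rcases hxy ⟨h1, h2⟩ with h | h
        · exact Set.mem_insert_iff.2 (Or.inl h)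
        · exact Set.mem_insert_iff.2 (Or.inr (Set.mem_insert_iff.2 (Or.inl h)))
      · rcases huv ⟨h1, h2⟩ with h | h
        · exact Set.mem_insert_iff.2 (Or.inr (Set.mem_insert_iff.2 (Or.inr
            (Set.mem_insert_iff.2 (Or.inl h)))))
        · exact Set.mem_insert_iff.2 (Or.inr (Set.mem_insert_iff.2 (Or.inr
            (Set.mem_insert_iff.2 (Or.inr h)))))
    calc ({C' : EuclideanSpace ℝ (Fin 2) | C' ∈ S ∧
        ¬ Collinear ℝ ({A, B, C'} : Set (EuclideanSpace ℝ (Fin 2))) ∧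
        ({dist A C', dist B C'} : Multiset ℝ) = {dist A C, dist B C}}).ncard
        ≤ ({x, y, u, v} : Set (EuclideanSpace ℝ (Fin 2))).ncard :=
          Set.ncard_le_ncard hsub (Set.toFinite _)
      _ ≤ 4 := by
          refine le_trans (Set.ncard_insert_le _ _) ?_
          refine le_trans (Nat.add_le_add_right (Set.ncard_insert_le _ _) 1) ?_
          refine le_trans (Nat.add_le_add_right
            (Nat.add_le_add_right (Set.ncard_insert_le _ _) 1) 1) ?_
          simp [Set.ncard_singleton]
  refine ⟨fun C _ _ => hb C, ?_⟩
  -- Part 2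
  set ℓ := affineSpan ℝ ({A, B} : Set (EuclideanSpace ℝ (Fin 2))) with hℓ
  set L := S.filter (fun p => p ∈ ℓ) with hL
  set O := S.filter (fun p => p ∉ ℓ) with hO
  have hLcol : Collinear ℝ (L : Set (EuclideanSpace ℝ (Fin 2))) := by
    have hspan : Collinear ℝ (ℓ : Set (EuclideanSpace ℝ (Fin 2))) := by
      have hvs : vectorSpan ℝ (ℓ : Set (EuclideanSpace ℝ (Fin 2)))
          = vectorSpan ℝ ({A, B} : Set (EuclideanSpace ℝ (Fin 2))) := by
        rw [show vectorSpan ℝ (ℓ : Set (EuclideanSpace ℝ (Fin 2))) = ℓ.direction from rfl,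
          hℓ, direction_affineSpan]
      show Module.rank ℝ (vectorSpan ℝ (ℓ : Set (EuclideanSpace ℝ (Fin 2)))) ≤ 1
      rw [hvs]
      exact collinear_pair ℝ A B
    exact hspan.subset (fun x hx => by
      have := Finset.mem_filter.1 (Finset.mem_coe.1 hx)
      exact this.2)
  have hLn : 2 * L.card ≤ n := hline L (Finset.filter_subset _ _) hLcol
  have hLO : L.card + O.card = n := by
    rw [← hcard, hL, hO]
    exact Finset.card_filter_add_card_filter_not _
  have hOncol : ∀ C ∈ O, ¬ Collinear ℝ ({A, B, C} : Set (EuclideanSpace ℝ (Fin 2))) := by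
    intro C hC hcol
    have hCnot := (Finset.mem_filter.1 hC).2
    exact hCnot (hcol.mem_affineSpan_of_mem_of_ne
      (Set.mem_insert _ _) (Set.mem_insert_of_mem _ (Set.mem_insert _ _))
      (Set.mem_insert_of_mem _ (Set.mem_insert_of_mem _ rfl)) hAB)
  set f : (EuclideanSpace ℝ (Fin 2)) → Multiset ℝ := fun C => ({dist A C, dist B C} : Multiset ℝ) with hf
  -- fiber bound
  have hfiber : ∀ C ∈ O, (O.filter (fun C' => f C' = f C)).card ≤ 4 := by
    intro C hC
    have hsub : ((O.filter (fun C' => f C' = f C)) : Set (EuclideanSpace ℝ (Fin 2))) ⊆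
        {C' : (EuclideanSpace ℝ (Fin 2)) | C' ∈ S ∧ ¬ Collinear ℝ ({A, B, C'} : Set (EuclideanSpace ℝ (Fin 2))) ∧
          ({dist A C', dist B C'} : Multiset ℝ) = {dist A C, dist B C}} := by
      intro C' hC'
      have h1 := Finset.mem_filter.1 (Finset.mem_coe.1 hC')
      exact ⟨(Finset.mem_filter.1 h1.1).1, hOncol C' h1.1, h1.2⟩
    have hfin : ({C' : (EuclideanSpace ℝ (Fin 2)) | C' ∈ S ∧ ¬ Collinear ℝ ({A, B, C'} : Set (EuclideanSpace ℝ (Fin 2))) ∧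
        ({dist A C', dist B C'} : Multiset ℝ) = {dist A C, dist B C}}).Finite :=
      S.finite_toSet.subset (fun x hx => hx.1)
    calc (O.filter (fun C' => f C' = f C)).card
        = ((O.filter (fun C' => f C' = f C)) : Set (EuclideanSpace ℝ (Fin 2))).ncard :=
          (Set.ncard_coe_finset _).symm
      _ ≤ _ := Set.ncard_le_ncard hsub hfin
      _ ≤ 4 := hb C
  have hO4 : O.card ≤ 4 * (O.image f).card := by
    rw [Finset.card_eq_sum_card_fiberwise (fun x hx => Finset.mem_image_of_mem f hx)]
    calc ∑ m ∈ O.image f, (O.filter (fun C' => f C' = m)).card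
        ≤ ∑ _m ∈ O.image f, 4 := by
          refine Finset.sum_le_sum (fun m hm => ?_)
          obtain ⟨C, hC, rfl⟩ := Finset.mem_image.1 hm
          exact hfiber C hC
      _ = 4 * (O.image f).card := by rw [Finset.sum_const, smul_eq_mul, mul_comm]
  set g : Multiset ℝ → (EuclideanSpace ℝ (Fin 2)) := fun m => if h : ∃ C ∈ O, f C = m then h.choose else A with hg
  have hgspec : ∀ m ∈ O.image f, g m ∈ O ∧ f (g m) = m := by
    intro m hm
    obtain ⟨C, hC, hfC⟩ := Finset.mem_image.1 hm
    have h : ∃ C ∈ O, f C = m := ⟨C, hC, hfC⟩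
    rw [hg]
    simp only [dif_pos h]
    exact ⟨h.choose_spec.1, h.choose_spec.2⟩
  refine ⟨(O.image f).image g, ?_, ?_, ?_, ?_⟩
  · intro x hx
    obtain ⟨m, hm, rfl⟩ := Finset.mem_image.1 hx
    exact (Finset.mem_filter.1 (hgspec m hm).1).1
  · have hinj : Set.InjOn g (O.image f) := by
      intro m hm m' hm' hgm
      rw [← (hgspec m hm).2, ← (hgspec m' hm').2, hgm]
    rw [Finset.card_image_of_injOn hinj]
    omega
  · intro C hC
    obtain ⟨m, hm, rfl⟩ := Finset.mem_image.1 hC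
    exact hOncol _ (hgspec m hm).1
  · intro C hC C' hC' hne heq
    obtain ⟨m, hm, rfl⟩ := Finset.mem_image.1 hC
    obtain ⟨m', hm', rfl⟩ := Finset.mem_image.1 hC'
    have : m = m' := by
      rw [← (hgspec m hm).2, ← (hgspec m' hm').2]
      exact heq
    exact hne (by rw [this])
end
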